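/- arXiv:1509.07567 — 10 statements merged into one kernel-verified Lean document; each statement's English description precedes it below -/
import Mathlib

section
/- If G = (V, →) is a majority digraph, i.e., there exist finite sets A_v for v ∈ V such that for distinct u, v we have u → v if and only if |A_u ∩ A_v| > (1/2)·|A_u|, then G has no one-way cycle: there is no sequence of distinct-edge steps v_1 → v_2 → ⋯ → v_n = v_1 with n ≥ 2 such that v_{i+1} ↛ v_i for all 1 ≤ i < n. -/
/-- A one-way cycle: a directed cycle `v 0 → v 1 → ⋯ → v n = v 0` (with at least one edge)
such that no reverse edge is present. -/
def HasOneWayCycle {V : Type*} (E : V → V → Prop) : Prop :=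
  ∃ (n : ℕ) (v : ℕ → V), 1 ≤ n ∧ v n = v 0 ∧
    ∀ i < n, E (v i) (v (i + 1)) ∧ ¬ E (v (i + 1)) (v i)

/-- A majority digraph has no one-way cycle. -/
theorem stmt_0 {V : Type*} [Fintype V] (E : V → V → Prop)
    (hirr : Irreflexive E)
    (A : V → Finset ℕ)
    (hmaj : ∀ u v : V, u ≠ v →
      (E u v ↔ ((A u ∩ A v).card : ℝ) > (1 / 2 : ℝ) * (A u).card)) :
    ¬ HasOneWayCycle E := by
  rintro ⟨n, v, hn, hvn, h⟩
  have key : ∀ i < n, (A (v i)).card < (A (v (i + 1))).card := by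
    intro i hi
    obtain ⟨he, hne⟩ := h i hi
    have hne1 : v i ≠ v (i + 1) := by
      intro heq; exact hirr (v i) (heq ▸ he)
    have h1 : ((A (v i) ∩ A (v (i + 1))).card : ℝ)
        > (1 / 2 : ℝ) * (A (v i)).card := (hmaj _ _ hne1).mp he
    have h2 : ¬ (((A (v (i + 1)) ∩ A (v i)).card : ℝ)
        > (1 / 2 : ℝ) * (A (v (i + 1))).card) := fun hc =>
      hne ((hmaj _ _ hne1.symm).mpr hc)
    rw [Finset.inter_comm] at h2
    push_neg at h2
    have : ((A (v i)).card : ℝ) < (A (v (i + 1))).card := by linarith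
    exact_mod_cast this
  have mono : ∀ k ≤ n, (A (v 0)).card ≤ (A (v k)).card := by
    intro k hk
    induction k with
    | zero => exact le_refl _
    | succ m ih =>
      exact le_trans (ih (le_of_lt (Nat.lt_of_succ_le hk)))
        (le_of_lt (key m (Nat.lt_of_succ_le hk)))
  obtain ⟨m, rfl⟩ := Nat.exists_eq_succ_of_ne_zero (Nat.one_le_iff_ne_zero.mp hn)
  have h1 := mono m (Nat.le_succ m)
  have h2 := key m (Nat.lt_succ_self m)
  rw [hvn] at h2
  omega
end

section
/- If G = (V, →) is a proportionality α-digraph for some real α ∈ (0,1), then every directed cycle in G has a reversal; equivalently, G has no one-way cycle. -/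
/-- A proportionality α-digraph (α ∈ (0,1)) has no one-way cycle. -/
theorem stmt_1 {V : Type*} [Fintype V] (E : V → V → Prop)
    (hirr : Irreflexive E) (α : ℝ) (hα0 : 0 < α) (hα1 : α < 1)
    (A : V → Finset ℕ)
    (hprop : ∀ u v : V, u ≠ v →
      (E u v ↔ ((A u ∩ A v).card : ℝ) > α * (A u).card)) :
    ¬ HasOneWayCycle E := by
  rintro ⟨n, v, hn, hvn, hcyc⟩
  have step : ∀ i < n, (A (v i)).card < (A (v (i + 1))).card := by
    intro i hi
    obtain ⟨he, hne⟩ := hcyc i hi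
    have hne' : v i ≠ v (i + 1) := by
      rintro h; exact hirr (v i) (h ▸ he)
    have h1 : ((A (v i) ∩ A (v (i + 1))).card : ℝ) > α * (A (v i)).card :=
      (hprop _ _ hne').mp he
    have h2 : ¬ ((A (v (i + 1)) ∩ A (v i)).card : ℝ) > α * (A (v (i + 1))).card := by
      intro h; exact hne ((hprop _ _ hne'.symm).mpr h)
    rw [Finset.inter_comm] at h2
    push_neg at h2
    have : α * (A (v i)).card < α * (A (v (i + 1))).card := lt_of_lt_of_le h1 h2
    exact_mod_cast lt_of_mul_lt_mul_left this hα0.le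
  have mono : ∀ k, k ≤ n → (A (v 0)).card ≤ (A (v k)).card := by
    intro k hk
    induction k with
    | zero => exact le_rfl
    | succ m ih =>
      exact le_of_lt (lt_of_le_of_lt (ih (Nat.le_of_succ_le hk)) (step m hk))
  have : (A (v 0)).card < (A (v n)).card := by
    obtain ⟨m, rfl⟩ := Nat.exists_eq_add_of_le hn
    exact lt_of_le_of_lt (mono m (by omega))
      (by simpa [Nat.add_comm] using step m (by omega))
  rw [hvn] at this
  exact lt_irrefl _ this
end

section
/- A finite digraph G on n vertices has no one-way cycle if and only if G is isomorphic to G_{S,T} for some appropriate pair (S,T), where (S,T) is appropriate if S is a set of unordered pairs {i,j} from {1,…,n}, T is a set of ordered pairs (i,j) from {1,…,n} with i < j, and (i,j) ∈ T implies {i,j} ∉ S; and G_{S,T} has vertex set {1,…,n} with i → j iff {i,j} ∈ S or (i,j) ∈ T. -/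
private lemma transGen_chain {V : Type*} {A : V → V → Prop} {x y : V}
    (h : Relation.TransGen A x y) :
    ∃ (m : ℕ) (v : ℕ → V), 1 ≤ m ∧ v 0 = x ∧ v m = y ∧ ∀ i < m, A (v i) (v (i + 1)) := by
  induction h with
  | @single b h => exact ⟨1, fun i => if i = 0 then x else b, le_refl 1, by simp, by simp,
      fun i hi => by interval_cases i; simpa using h⟩
  | @tail b c _ hbc ih =>
    obtain ⟨m, v, hm, hv0, hvm, hstep⟩ := ih
    refine ⟨m + 1, fun i => if i ≤ m then v i else c, by omega, by simp [hv0], by simp, ?_⟩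
    intro i hi
    rcases lt_or_eq_of_le (Nat.lt_succ_iff.mp hi) with h' | h'
    · simpa [Nat.le_of_lt h', h'.le, Nat.succ_le_of_lt h'] using hstep i h'
    · subst h'; simpa [hvm] using hbc

/-- A finite digraph on `n` vertices has no one-way cycle iff it is isomorphic to
`G_{S,T}` for some appropriate pair `(S, T)`. -/
theorem stmt_3 {V : Type*} [Fintype V] (n : ℕ) (hn : Fintype.card V = n)
    (E : V → V → Prop) (hirr : Irreflexive E) :
    ¬ HasOneWayCycle E ↔
      ∃ (S : Set (Sym2 (Fin n))) (T : Set (Fin n × Fin n)),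
        (∀ p ∈ S, ¬ p.IsDiag) ∧
        (∀ p ∈ T, p.1 < p.2) ∧
        (∀ p ∈ T, s(p.1, p.2) ∉ S) ∧
        ∃ e : V ≃ Fin n, ∀ u v : V, E u v ↔ (s(e u, e v) ∈ S ∨ (e u, e v) ∈ T) := by
  classical
  set A : V → V → Prop := fun u v => E u v ∧ ¬ E v u with hA
  constructor
  · intro hnc
    -- TransGen A is irreflexive
    have hirrT : ∀ x : V, ¬ Relation.TransGen A x x := by
      intro x hx
      obtain ⟨m, v, hm, hv0, hvm, hstep⟩ := transGen_chain hx
      exact hnc ⟨m, v, hm, by rw [hvm, hv0], fun i hi => hstep i hi⟩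
    -- partial order
    set le : V → V → Prop := fun a b => Relation.TransGen A a b ∨ a = b with hle
    haveI : IsPartialOrder V le := by
      refine { refl := fun a => Or.inr rfl, trans := ?_, antisymm := ?_ }
      · intro a b c hab hbc
        rcases hab with h1 | rfl
        · rcases hbc with h2 | rfl
          · exact Or.inl (h1.trans h2)
          · exact Or.inl h1
        · exact hbc
      · intro a b hab hba
        rcases hab with h1 | h1
        · rcases hba with h2 | h2
          · exact absurd (h1.trans h2) (hirrT a)
          · exact h2.symm
        · exact h1
    obtain ⟨s, hs, hrs⟩ := extend_partialOrder le
    haveI := hs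
    set t : V → V → Prop := fun a b => s a b ∧ a ≠ b with ht
    haveI : IsStrictTotalOrder V t := by
      refine { trichotomous := ?_, irrefl := fun a ha => ha.2 rfl, trans := ?_ }
      · intro a b
        rcases eq_or_ne a b with rfl | hab
        · exact fun _ _ => rfl
        · rcases hs.total a b with h | h
          · exact fun h1 _ => (h1 ⟨h, hab⟩).elim
          · exact fun _ h2 => (h2 ⟨h, hab.symm⟩).elim
      · rintro a b c hab hbc
        refine ⟨hs.trans _ _ _ hab.1 hbc.1, ?_⟩
        rintro rfl
        exact hab.2 (hs.antisymm _ _ hab.1 hbc.1)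
    haveI : DecidableRel t := fun a b => Classical.dec _
    letI : LinearOrder V := linearOrderOfSTO t
    have hlt : ∀ a b : V, A a b → a < b := by
      intro a b hab
      have h1 : le a b := Or.inl (Relation.TransGen.single hab)
      refine ⟨hrs _ _ h1, ?_⟩
      rintro rfl
      exact hab.2 hab.1
    let e : V ≃o Fin n := (monoEquivOfFin V hn).symm
    refine ⟨Sym2.fromRel (r := fun i j : Fin n => E (e.symm i) (e.symm j) ∧ E (e.symm j) (e.symm i))
      ⟨fun i j h => ⟨h.2, h.1⟩⟩,
      {p : Fin n × Fin n | E (e.symm p.1) (e.symm p.2) ∧ ¬ E (e.symm p.2) (e.symm p.1)},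
      ?_, ?_, ?_, e.toEquiv, ?_⟩
    · intro p hp
      induction p using Sym2.ind with
      | _ i j =>
        rw [Sym2.fromRel_prop] at hp
        intro hd
        rw [Sym2.mk_isDiag_iff] at hd
        exact hirr _ (hd ▸ hp.1)
    · rintro ⟨i, j⟩ hp
      have := hlt _ _ hp
      simpa using e.symm.lt_iff_lt.mp this
    · rintro ⟨i, j⟩ hp hS
      rw [Sym2.fromRel_prop] at hS
      exact hp.2 hS.2
    · intro u v
      simp only [Sym2.fromRel_prop, Set.mem_setOf_eq]
      have h1 : ∀ w : V, e.symm (e.toEquiv w) = w := fun w => e.symm_apply_apply w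
      rw [h1, h1]
      by_cases h : E v u
      · simp [h]
      · tauto
  · rintro ⟨S, T, hSd, hTlt, hTS, e, he⟩ ⟨m, v, hm, hvm, hstep⟩
    have key : ∀ i < m, e (v i) < e (v (i + 1)) := by
      intro i hi
      obtain ⟨h1, h2⟩ := hstep i hi
      rcases (he _ _).mp h1 with hS | hT
      · exact absurd ((he _ _).mpr (Or.inl (by rwa [Sym2.eq_swap]))) h2
      · exact hTlt _ hT
    have mono : ∀ i ≤ m, e (v 0) ≤ e (v i) := by
      intro i hi
      induction i with
      | zero => exact le_refl _
      | succ k ih => exact le_trans (ih (by omega)) (key k (by omega)).le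
    have h1 : e (v 0) ≤ e (v (m - 1)) := mono _ (by omega)
    have h2 : e (v (m - 1)) < e (v m) := by
      have := key (m - 1) (by omega)
      rwa [Nat.sub_add_cancel hm] at this
    rw [hvm] at h2
    exact absurd (lt_of_le_of_lt h1 h2) (lt_irrefl _)
end

section
/- Let G be a finite digraph on n vertices with no one-way cycle, and let p < q be positive natural numbers. Then G is a proportionality p/q-digraph: there exist finite sets A_v for the vertices v of G such that for distinct u, v: u → v iff q·|A_u ∩ A_v| > p·|A_u|. -/
set_option linter.unusedSectionVars false

namespace Stmt6


open Finset

variable {V : Type*}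

lemma transGen_walk {E : V → V → Prop} {a b : V} (h : Relation.TransGen E a b) :
    ∃ (n : ℕ) (f : ℕ → V), 1 ≤ n ∧ f 0 = a ∧ f n = b ∧ ∀ i < n, E (f i) (f (i + 1)) := by
  induction h with
  | @single c h =>
      refine ⟨1, fun i => if i = 0 then a else c, le_refl 1, by simp, by simp, ?_⟩
      intro i hi
      interval_cases i
      simpa using h
  | @tail b' c hab hbc ih =>
      obtain ⟨n, f, hn, h0, hb', hs⟩ := ih
      refine ⟨n + 1, fun i => if i ≤ n then f i else c, by omega, by simp [h0], by simp, ?_⟩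
      intro i hi
      rcases Nat.lt_or_ge i n with h | h
      · have h1 : i ≤ n := le_of_lt h
        have h2 : i + 1 ≤ n := h
        simpa [h1, h2] using hs i h
      · have h1 : i = n := by omega
        subst h1
        simp [hb', hbc]

lemma exists_rank [Fintype V] {E : V → V → Prop} (hnc : ¬ HasOneWayCycle E) :
    ∃ r : V → ℕ, (∀ v, r v ≤ Fintype.card V) ∧
      ∀ u v, E u v → ¬ E v u → r u < r v := by
  classical
  set E' : V → V → Prop := fun u v => E u v ∧ ¬ E v u with hE'
  have hirr' : ∀ v, ¬ Relation.TransGen E' v v := by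
    intro v hv
    obtain ⟨n, f, hn, h0, hb, hs⟩ := transGen_walk hv
    refine hnc ⟨n, f, hn, by rw [hb, h0], fun i hi => ?_⟩
    exact hs i hi
  refine ⟨fun v => (univ.filter (fun u => Relation.TransGen E' u v)).card,
    fun v => by simpa using card_filter_le univ _, ?_⟩
  intro u v huv hvu
  apply Finset.card_lt_card
  rw [Finset.ssubset_def]
  constructor
  · intro w hw
    simp only [mem_filter, mem_univ, true_and] at hw ⊢
    exact hw.tail ⟨huv, hvu⟩
  · intro hsub
    have hu : u ∈ univ.filter (fun w => Relation.TransGen E' w v) := by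
      simp only [mem_filter, mem_univ, true_and]
      exact Relation.TransGen.single ⟨huv, hvu⟩
    have := hsub hu
    simp only [mem_filter] at this
    exact hirr' u this.2



open Finset

variable {V : Type*}

lemma blk_disjoint {κ : Type*} (inj : κ → ℕ) (hinj : Function.Injective inj)
    (sz : κ → ℕ) (W : ℕ) (hW : ∀ k, sz k ≤ W) {k k' : κ} (h : k ≠ k') :
    Disjoint (Finset.Ico (inj k * W) (inj k * W + sz k))
      (Finset.Ico (inj k' * W) (inj k' * W + sz k')) := by
  have hne : inj k ≠ inj k' := fun h' => h (hinj h')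
  rw [Finset.disjoint_left]
  intro x hx hx'
  simp only [Finset.mem_Ico] at hx hx'
  rcases Nat.lt_or_ge (inj k) (inj k') with hlt | hge
  · have : inj k * W + sz k ≤ inj k' * W := by
      calc inj k * W + sz k ≤ inj k * W + W := by have := hW k; omega
        _ = (inj k + 1) * W := by ring
        _ ≤ inj k' * W := Nat.mul_le_mul_right W hlt
    omega
  · have hlt : inj k' < inj k := by omega
    have : inj k' * W + sz k' ≤ inj k * W := by
      calc inj k' * W + sz k' ≤ inj k' * W + W := by have := hW k'; omega
        _ = (inj k' + 1) * W := by ring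
        _ ≤ inj k * W := Nat.mul_le_mul_right W hlt
    omega

lemma biUnion_inter {κ α : Type*} [DecidableEq α] [DecidableEq κ] {f : κ → Finset α}
    (hd : ∀ k k', k ≠ k' → Disjoint (f k) (f k')) (S T : Finset κ) :
    (S.biUnion f) ∩ (T.biUnion f) = (S ∩ T).biUnion f := by
  ext x
  simp only [Finset.mem_inter, Finset.mem_biUnion]
  constructor
  · rintro ⟨⟨k, hkS, hx⟩, ⟨k', hk'T, hx'⟩⟩
    have hkk : k = k' := by
      by_contra hne
      exact Finset.disjoint_left.mp (hd k k' hne) hx hx'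
    subst hkk
    exact ⟨k, ⟨hkS, hk'T⟩, hx⟩
  · rintro ⟨k, ⟨hk1, hk2⟩, hx⟩
    exact ⟨⟨k, hk1, hx⟩, ⟨k, hk2, hx⟩⟩

variable [Fintype V] [DecidableEq V]

noncomputable def pk (u v : V) : Option V × Option V :=
  if (Fintype.equivFin V u : ℕ) < (Fintype.equivFin V v : ℕ) then (some u, some v)
  else (some v, some u)

lemma pk_ne_core (u v : V) : pk u v ≠ (none, none) := by
  unfold pk; split_ifs <;> simp

lemma pk_ne_priv (u v w : V) : pk u v ≠ (some w, none) := by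
  unfold pk; split_ifs <;> simp

lemma pk_comm {u v : V} (h : u ≠ v) : pk u v = pk v u := by
  have hne : (Fintype.equivFin V u : ℕ) ≠ (Fintype.equivFin V v : ℕ) := by
    intro h'
    exact h ((Fintype.equivFin V).injective (Fin.ext h'))
  unfold pk
  split_ifs with h1 h2 h2 <;> first | rfl | omega

lemma pk_eq' {w u w' v : V} (h : pk w u = pk w' v) :
    (w = w' ∧ u = v) ∨ (w = v ∧ u = w') := by
  unfold pk at h
  split_ifs at h <;> simp only [Prod.mk.injEq, Option.some.injEq] at h <;> tauto

noncomputable def gI : Option V → ℕ := fun o => o.elim 0 (fun v => (Fintype.equivFin V v : ℕ) + 1)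

lemma gI_inj : Function.Injective (gI (V := V)) := by
  intro o o' h
  cases o with
  | none => cases o' with
    | none => rfl
    | some v => simp [gI] at h
  | some u => cases o' with
    | none => simp [gI] at h
    | some v =>
        simp only [gI, Option.elim] at h
        have : Fintype.equivFin V u = Fintype.equivFin V v := Fin.ext (by omega)
        rw [(Fintype.equivFin V).injective this]

noncomputable def idxf : Option V × Option V → ℕ := fun k => Nat.pair (gI k.1) (gI k.2)

lemma idxf_inj : Function.Injective (idxf (V := V)) := by
  intro k k' h
  simp only [idxf] at h
  rw [Nat.pair_eq_pair] at h
  exact Prod.ext (gI_inj h.1) (gI_inj h.2)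

def szf (c : ℕ) (b : V → V → ℕ) (pad : V → ℕ) : Option V × Option V → ℕ
  | (none, none) => c
  | (some v, none) => pad v
  | (none, some _) => 0
  | (some u, some v) => b u v

@[simp] lemma szf_core {c : ℕ} {b : V → V → ℕ} {pad : V → ℕ} :
    szf c b pad (none, none) = c := rfl

@[simp] lemma szf_priv {c : ℕ} {b : V → V → ℕ} {pad : V → ℕ} (v : V) :
    szf c b pad (some v, none) = pad v := rfl

lemma szf_pk {c : ℕ} {b : V → V → ℕ} {pad : V → ℕ} (hb : ∀ u v, b u v = b v u)
    (u v : V) : szf c b pad (pk u v) = b u v := by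
  unfold pk
  split_ifs <;> simp [szf, hb u v]

noncomputable def keysf (v : V) : Finset (Option V × Option V) :=
  insert (none, none) (insert (some v, none) ((univ.erase v).image (fun u => pk u v)))

lemma keys_inter {u v : V} (h : u ≠ v) :
    keysf u ∩ keysf v = {((none, none) : Option V × Option V), pk u v} := by
  ext k
  simp only [keysf, Finset.mem_inter, Finset.mem_insert, Finset.mem_image,
    Finset.mem_erase, Finset.mem_univ, and_true, Finset.mem_singleton]
  constructor
  · rintro ⟨(rfl | rfl | ⟨w, hw, rfl⟩), (h2 | h2 | ⟨w', hw', h2⟩)⟩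
    · exact Or.inl rfl
    · exact Or.inl rfl
    · exact Or.inl rfl
    · exact absurd h2 (by simp)
    · simp only [Prod.mk.injEq, Option.some.injEq] at h2
      exact absurd h2.1 h
    · exact absurd h2 (pk_ne_priv w' v u)
    · exact absurd h2 (pk_ne_core w u)
    · exact absurd h2 (pk_ne_priv w u v)
    · rcases pk_eq' h2.symm with ⟨h3, h4⟩ | ⟨h3, h4⟩
      · exact absurd h4 h
      · subst h3
        exact Or.inr (pk_comm h).symm
  · rintro (rfl | rfl)
    · exact ⟨Or.inl rfl, Or.inl rfl⟩
    · refine ⟨Or.inr (Or.inr ⟨v, h.symm, pk_comm h.symm⟩), Or.inr (Or.inr ⟨u, h, rfl⟩)⟩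

lemma exists_sets (c : ℕ) (b : V → V → ℕ) (hb : ∀ u v, b u v = b v u) (pad : V → ℕ) :
    ∃ A : V → Finset ℕ,
      (∀ v, (A v).card = c + pad v + ∑ u ∈ Finset.univ.erase v, b u v) ∧
      (∀ u v, u ≠ v → ((A u) ∩ (A v)).card = c + b u v) := by
  classical
  set W : ℕ := c + (∑ v, pad v) + (∑ u, ∑ v, b u v) with hW
  have hWle : ∀ k, szf c b pad k ≤ W := by
    rintro ⟨(_ | x), (_ | y)⟩
    · simp [szf]; omega
    · simp only [szf]; omega
    · have h1 : pad x ≤ ∑ v, pad v := Finset.single_le_sum (fun _ _ => Nat.zero_le _) (mem_univ x)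
      simp only [szf]; omega
    · have h1 : b x y ≤ ∑ v, b x v := Finset.single_le_sum (fun _ _ => Nat.zero_le _) (mem_univ y)
      have h2 : (∑ v, b x v) ≤ ∑ u, ∑ v, b u v :=
        Finset.single_le_sum (f := fun u => ∑ v, b u v) (fun _ _ => Nat.zero_le _) (mem_univ x)
      simp only [szf]; omega
  set blk : Option V × Option V → Finset ℕ :=
    fun k => Finset.Ico (idxf k * W) (idxf k * W + szf c b pad k) with hblk
  have hdisj : ∀ k k', k ≠ k' → Disjoint (blk k) (blk k') :=
    fun k k' h => blk_disjoint idxf idxf_inj _ W hWle h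
  have hblkcard : ∀ k, (blk k).card = szf c b pad k := by
    intro k; simp [hblk]
  refine ⟨fun v => (keysf v).biUnion blk, ?_, ?_⟩
  · intro v
    rw [Finset.card_biUnion (fun k _ k' _ h => hdisj k k' h)]
    rw [keysf]
    rw [Finset.sum_insert (by
      simp only [Finset.mem_insert, Finset.mem_image]
      push_neg
      exact ⟨by simp, fun w _ => (pk_ne_core w v).symm ∘ Eq.symm⟩)]
    rw [Finset.sum_insert (by
      simp only [Finset.mem_image]
      push_neg
      exact fun w _ => (pk_ne_priv w v v).symm ∘ Eq.symm)]
    rw [Finset.sum_image (by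
      intro w hw w' hw' hww
      simp only [Finset.mem_coe, Finset.mem_erase] at hw hw'
      rcases pk_eq' hww with ⟨h1, _⟩ | ⟨h1, h2⟩
      · exact h1
      · exact absurd h1 hw.1)]
    simp only [hblkcard, szf_core, szf_priv, szf_pk hb]
    omega
  · intro u v huv
    rw [biUnion_inter hdisj, keys_inter huv]
    rw [Finset.card_biUnion (fun k _ k' _ h => hdisj k k' h)]
    rw [Finset.sum_pair (Ne.symm (pk_ne_core u v))]
    simp only [hblkcard, szf_core, szf_pk hb]


end Stmt6


set_option maxHeartbeats 800000 in
/-- Every finite digraph with no one-way cycle is a proportionality `p/q`-digraph. -/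
theorem stmt_6 {V : Type*} [Fintype V] (E : V → V → Prop)
    (hirr : Irreflexive E) (hnc : ¬ HasOneWayCycle E)
    (p q : ℕ) (hp : 0 < p) (hpq : p < q) :
    ∃ A : V → Finset ℕ, ∀ u v : V, u ≠ v →
      (E u v ↔ q * (A u ∩ A v).card > p * (A u).card) := by
  classical
  obtain ⟨r, hrle, hrlt⟩ := Stmt6.exists_rank hnc
  set n := Fintype.card V with hn
  set b : V → V → ℕ := fun u v =>
    if E u v ∧ E v u then p * max (r u) (r v) + 1
    else if E u v then p * r v
    else if E v u then p * r u
    else 0 with hbdef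
  have hbsymm : ∀ u v, b u v = b v u := by
    intro u v
    by_cases h1 : E u v <;> by_cases h2 : E v u <;>
      simp [hbdef, h1, h2, Nat.max_comm]
  set N : ℕ := n * (p * n + 1) + 1 with hN
  have hble : ∀ u v : V, b u v ≤ p * n + 1 := by
    intro u v
    have h1 := hrle u
    have h2 := hrle v
    have h3 : max (r u) (r v) ≤ n := max_le h1 h2
    by_cases e1 : E u v <;> by_cases e2 : E v u <;>
      simp only [hbdef, e1, e2, and_true, and_false, true_and, if_true, if_false] <;>
      [skip; skip; skip; omega]
    · have := Nat.mul_le_mul_left p h3; omega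
    · have := Nat.mul_le_mul_left p h2; omega
    · have := Nat.mul_le_mul_left p h1; omega
  have hsum : ∀ v : V, (∑ u ∈ Finset.univ.erase v, b u v) ≤ n * (p * n + 1) := by
    intro v
    calc (∑ u ∈ Finset.univ.erase v, b u v)
        ≤ (Finset.univ.erase v).card * (p * n + 1) := by
          rw [← smul_eq_mul]
          exact Finset.sum_le_card_nsmul _ _ _ (fun u _ => hble u v)
      _ ≤ n * (p * n + 1) := by
          apply Nat.mul_le_mul_right
          exact le_trans (Finset.card_erase_le) (le_of_eq (by simp [hn]))
  set pad : V → ℕ := fun v =>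
    q * (N + r v) - (p * N + ∑ u ∈ Finset.univ.erase v, b u v) with hpad
  obtain ⟨A, hcard, hint⟩ := Stmt6.exists_sets (p * N) b hbsymm pad
  refine ⟨A, fun u v huv => ?_⟩
  have hAcard : ∀ w : V, (A w).card = q * (N + r w) := by
    intro w
    rw [hcard w]
    have h1 := hsum w
    have h2 : (p + 1) * N ≤ q * (N + r w) :=
      Nat.mul_le_mul hpq (Nat.le_add_right _ _)
    have h3 : (p + 1) * N = p * N + N := by ring
    simp only [hpad]
    omega
  rw [hAcard u, hint u v huv]
  have hq : 0 < q := lt_trans hp hpq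
  have key : (p * (q * (N + r u)) < q * (p * N + b u v)) ↔ p * r u < b u v := by
    rw [show p * (q * (N + r u)) = q * p * N + q * (p * r u) by ring,
      show q * (p * N + b u v) = q * p * N + q * b u v by ring,
      Nat.add_lt_add_iff_left]
    exact Nat.mul_lt_mul_left hq
  rw [gt_iff_lt, key]
  by_cases h1 : E u v <;> by_cases h2 : E v u
  · simp only [hbdef, h1, h2, and_self, if_true, iff_true, true_iff]
    have : p * r u ≤ p * max (r u) (r v) := Nat.mul_le_mul_left p (le_max_left _ _)
    omega
  · simp only [hbdef, h1, h2, and_false, if_false, if_true, true_iff, iff_true]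
    exact Nat.mul_lt_mul_left hp |>.mpr (hrlt u v h1 h2)
  · simp only [hbdef, h1, h2, false_and, if_false, if_true, false_iff, iff_false]
    omega
  · simp only [hbdef, h1, h2, false_and, if_false, false_iff, iff_false]
    omega
end

section
/- Every finite digraph with no one-way cycle is a majority digraph: there exist finite sets A_v for the vertices such that for distinct u, v, we have u → v iff 2·|A_u ∩ A_v| > |A_u|. -/
open Finset

private lemma aux_minmax {a b c d : ℕ} (h1 : min a b = min c d) (h2 : max a b = max c d) :
    (a = c ∧ b = d) ∨ (a = d ∧ b = c) := by
  simp only [Nat.min_def, Nat.max_def] at h1 h2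
  split_ifs at h1 h2 <;> omega

private lemma aux_chain {V : Type*} (S : V → V → Prop) (a b : V)
    (h : Relation.TransGen S a b) :
    ∃ (n : ℕ) (f : ℕ → V), 1 ≤ n ∧ f 0 = a ∧ f n = b ∧ ∀ i < n, S (f i) (f (i + 1)) := by
  induction h with
  | @single c hs =>
    refine ⟨1, fun i => if i = 0 then a else c, le_refl 1, by simp, by simp, ?_⟩
    intro i hi
    interval_cases i
    simpa using hs
  | @tail b c hab hbc ih =>
    obtain ⟨n, f, hn, h0, hb, hstep⟩ := ih
    refine ⟨n + 1, fun i => if i ≤ n then f i else c, by omega, by simp [h0], by simp, ?_⟩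
    intro i hi
    rcases Nat.lt_or_ge i n with h | h
    · simpa [Nat.le_of_lt h, Nat.succ_le_of_lt h] using hstep i h
    · have : i = n := by omega
      subst this
      simpa [hb] using hbc

/-- Every finite digraph with no one-way cycle is a majority digraph. -/
theorem stmt_7 {V : Type*} [Fintype V] (E : V → V → Prop)
    (hirr : Irreflexive E) (hnc : ¬ HasOneWayCycle E) :
    ∃ A : V → Finset ℕ, ∀ u v : V, u ≠ v →
      (E u v ↔ 2 * (A u ∩ A v).card > (A u).card) := by
  classical
  set m := Fintype.card V with hm
  set S : V → V → Prop := fun u v => E u v ∧ ¬ E v u with hSdef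
  -- S has no cycles
  have hT : ∀ u : V, ¬ Relation.TransGen S u u := by
    intro u h
    obtain ⟨n, f, hn, h0, hb, hstep⟩ := aux_chain S u u h
    exact hnc ⟨n, f, hn, by rw [hb, h0], fun i hi => hstep i hi⟩
  -- rank
  set r : V → ℕ := fun u => (univ.filter fun w => Relation.TransGen S w u).card with hrdef
  have hrle : ∀ u, r u ≤ m := fun u => (card_filter_le _ _).trans (le_of_eq rfl)
  have hr : ∀ u v, S u v → r u < r v := by
    intro u v hS
    apply card_lt_card
    constructor
    · intro w hw
      simp only [mem_filter, mem_univ, true_and] at hw ⊢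
      exact hw.tail hS
    · intro hsub
      have hu : u ∈ univ.filter fun w => Relation.TransGen S w v := by
        simp only [mem_filter, mem_univ, true_and]
        exact Relation.TransGen.single hS
      have := hsub hu
      simp only [mem_filter, mem_univ, true_and] at this
      exact hT u this
  -- pair intersection bonuses
  set s : V → V → ℕ := fun u v =>
    if E u v ∧ E v u then 2 * max (r u) (r v) + 1
    else if E u v then 2 * r u + 1
    else if E v u then 2 * r v + 1
    else 0 with hsdef
  have hssymm : ∀ u v, s u v = s v u := by
    intro u v
    by_cases h1 : E u v <;> by_cases h2 : E v u <;>
      simp [hsdef, h1, h2, Nat.max_comm]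
  have hsle : ∀ u v, s u v ≤ 2 * m + 1 := by
    intro u v
    have := hrle u; have := hrle v
    have : max (r u) (r v) ≤ m := by omega
    by_cases h1 : E u v <;> by_cases h2 : E v u <;>
      simp [hsdef, h1, h2] <;> omega
  -- the key arithmetic property
  have hkey : ∀ u v : V, u ≠ v → (E u v ↔ s u v > 2 * r u) := by
    intro u v huv
    by_cases h1 : E u v <;> by_cases h2 : E v u
    · have hs : s u v = 2 * max (r u) (r v) + 1 := by simp [hsdef, h1, h2]
      have hle : r u ≤ max (r u) (r v) := le_max_left _ _
      exact iff_of_true h1 (by omega)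
    · have hs : s u v = 2 * r u + 1 := by simp [hsdef, h1, h2]
      exact iff_of_true h1 (by omega)
    · have hlt : r v < r u := hr v u ⟨h2, h1⟩
      have hs : s u v = 2 * r v + 1 := by simp [hsdef, h1, h2]
      exact iff_of_false h1 (by omega)
    · have hs : s u v = 0 := by simp [hsdef, h1, h2]
      exact iff_of_false h1 (by omega)
  -- sizes
  set g : ℕ := (m + 1) * (2 * m + 1) with hgdef
  have hsum : ∀ u : V, (∑ v ∈ univ.erase u, s u v) ≤ g := by
    intro u
    calc (∑ v ∈ univ.erase u, s u v) ≤ (univ.erase u).card * (2 * m + 1) := by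
          apply Finset.sum_le_card_nsmul
          intro v _; exact hsle u v
      _ ≤ (m + 1) * (2 * m + 1) := by
          apply Nat.mul_le_mul_right
          have h1 : (univ.erase u).card ≤ univ.card := card_erase_le
          have h2 : (univ : Finset V).card = m := card_univ
          omega
  set p : V → ℕ := fun u => g + 4 * r u - ∑ v ∈ univ.erase u, s u v with hpdef
  have hp : ∀ u, p u + (∑ v ∈ univ.erase u, s u v) = g + 4 * r u := by
    intro u
    have := hsum u
    simp only [hpdef]
    omega
  -- injective labelling of vertices
  set ι : V → ℕ := fun v => ((Fintype.equivFin V) v : ℕ) with hιdef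
  have hιinj : Function.Injective ι := by
    intro a b h
    exact (Fintype.equivFin V).injective (Fin.val_injective h)
  -- the blocks
  set G : Finset ℕ := (range g).image fun k => Nat.pair 0 k with hGdef
  set pk : V → V → ℕ := fun u v => Nat.pair (min (ι u) (ι v)) (max (ι u) (ι v)) with hpkdef
  have hpkinj : ∀ a b c d : V, pk a b = pk c d → (a = c ∧ b = d) ∨ (a = d ∧ b = c) := by
    intro a b c d h
    simp only [hpkdef, Nat.pair_eq_pair] at h
    rcases aux_minmax h.1 h.2 with ⟨h1, h2⟩ | ⟨h1, h2⟩
    · exact Or.inl ⟨hιinj h1, hιinj h2⟩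
    · exact Or.inr ⟨hιinj h1, hιinj h2⟩
  have hpksymm : ∀ u v, pk u v = pk v u := by
    intro u v; simp [hpkdef, Nat.min_comm, Nat.max_comm]
  set P : V → V → Finset ℕ := fun u v =>
    (range (s u v)).image fun k => Nat.pair 1 (Nat.pair (pk u v) k) with hPdef
  have hPsymm : ∀ u v, P u v = P v u := by
    intro u v; simp [hPdef, hssymm u v, hpksymm u v]
  set Q : V → Finset ℕ := fun u =>
    (range (p u)).image fun k => Nat.pair 2 (Nat.pair (ι u) k) with hQdef
  set A : V → Finset ℕ := fun u => (G ∪ Q u) ∪ (univ.erase u).biUnion (fun v => P u v)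
    with hAdef
  -- cardinalities of blocks
  have hcardG : G.card = g := by
    rw [hGdef, card_image_of_injective, card_range]
    intro a b h
    exact (Nat.pair_eq_pair.mp h).2
  have hcardP : ∀ u v, (P u v).card = s u v := by
    intro u v
    rw [hPdef]
    rw [card_image_of_injective, card_range]
    intro a b h
    exact (Nat.pair_eq_pair.mp (Nat.pair_eq_pair.mp h).2).2
  have hcardQ : ∀ u, (Q u).card = p u := by
    intro u
    rw [hQdef]
    rw [card_image_of_injective, card_range]
    intro a b h
    exact (Nat.pair_eq_pair.mp (Nat.pair_eq_pair.mp h).2).2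
  -- disjointness
  have hGQ : ∀ u, Disjoint G (Q u) := by
    intro u
    rw [Finset.disjoint_left]
    rintro x hx hx'
    simp only [hGdef, hQdef, mem_image, mem_range] at hx hx'
    obtain ⟨k, _, rfl⟩ := hx
    obtain ⟨k', _, h⟩ := hx'
    exact absurd (Nat.pair_eq_pair.mp h).1 (by omega)
  have hGP : ∀ u v, Disjoint G (P u v) := by
    intro u v
    rw [Finset.disjoint_left]
    rintro x hx hx'
    simp only [hGdef, hPdef, mem_image, mem_range] at hx hx'
    obtain ⟨k, _, rfl⟩ := hx
    obtain ⟨k', _, h⟩ := hx'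
    exact absurd (Nat.pair_eq_pair.mp h).1 (by omega)
  have hQP : ∀ u v w, Disjoint (Q u) (P v w) := by
    intro u v w
    rw [Finset.disjoint_left]
    rintro x hx hx'
    simp only [hQdef, hPdef, mem_image, mem_range] at hx hx'
    obtain ⟨k, _, rfl⟩ := hx
    obtain ⟨k', _, h⟩ := hx'
    exact absurd (Nat.pair_eq_pair.mp h).1 (by omega)
  have hPP : ∀ u v w, u ≠ v → u ≠ w → v ≠ w → Disjoint (P u v) (P u w) := by
    intro u v w huv huw hvw
    rw [Finset.disjoint_left]
    rintro x hx hx'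
    simp only [hPdef, mem_image, mem_range] at hx hx'
    obtain ⟨k, _, rfl⟩ := hx
    obtain ⟨k', _, h⟩ := hx'
    have h2 := (Nat.pair_eq_pair.mp h).2
    have h3 := (Nat.pair_eq_pair.mp h2).1
    rcases hpkinj u v u w h3.symm with ⟨_, h4⟩ | ⟨h4, _⟩
    · exact hvw h4
    · exact huw h4
  -- card of A u
  have hcardA : ∀ u, (A u).card = 2 * g + 4 * r u := by
    intro u
    rw [hAdef]
    rw [card_union_of_disjoint, card_union_of_disjoint (hGQ u), card_biUnion]
    · rw [hcardG, hcardQ]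
      have hsumP : (∑ v ∈ univ.erase u, (P u v).card) = ∑ v ∈ univ.erase u, s u v :=
        Finset.sum_congr rfl fun v _ => hcardP u v
      have := hp u
      omega
    · intro v hv w hw hvw
      apply hPP u v w
      · exact fun h => (mem_erase.mp hv).1 h.symm
      · exact fun h => (mem_erase.mp hw).1 h.symm
      · exact hvw
    · rw [Finset.disjoint_left]
      intro x hx hx'
      simp only [mem_biUnion] at hx'
      obtain ⟨w, hw, hxw⟩ := hx'
      rcases mem_union.mp hx with h | h
      · exact (Finset.disjoint_left.mp (hGP u w)) h hxw
      · exact (Finset.disjoint_left.mp (hQP u u w)) h hxw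
  -- intersection
  have hInt : ∀ u v : V, u ≠ v → A u ∩ A v = G ∪ P u v := by
    intro u v huv
    ext x
    simp only [mem_inter, mem_union]
    constructor
    · rintro ⟨hxu, hxv⟩
      simp only [hAdef, mem_union, mem_biUnion, mem_erase, mem_univ, and_true] at hxu hxv
      rcases hxu with (hG | hQ) | ⟨w, hwu, hPw⟩
      · exact Or.inl hG
      · -- x ∈ Q u : contradiction with all parts of A v
        exfalso
        rcases hxv with (hG | hQ') | ⟨w, hwv, hPw⟩
        · exact (Finset.disjoint_left.mp (hGQ u)) hG hQ
        · simp only [hQdef, mem_image, mem_range] at hQ hQ'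
          obtain ⟨k, _, rfl⟩ := hQ
          obtain ⟨k', _, h⟩ := hQ'
          have := (Nat.pair_eq_pair.mp (Nat.pair_eq_pair.mp h).2).1
          exact huv (hιinj this.symm)
        · exact (Finset.disjoint_left.mp (hQP u v w)) hQ hPw
      · -- x ∈ P u w
        rcases hxv with (hG | hQ') | ⟨w', hwv, hPw'⟩
        · exact absurd hG ((Finset.disjoint_right.mp (hGP u w)) hPw)
        · exact absurd hQ' ((Finset.disjoint_right.mp (hQP v u w)) hPw)
        · -- pk u w = pk v w'
          simp only [hPdef, mem_image, mem_range] at hPw hPw'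
          obtain ⟨k, hk, rfl⟩ := hPw
          obtain ⟨k', hk', h⟩ := hPw'
          have h2 := (Nat.pair_eq_pair.mp h).2
          have h3 := (Nat.pair_eq_pair.mp h2).1
          rcases hpkinj v w' u w h3 with ⟨h4, h5⟩ | ⟨h4, h5⟩
          · exact absurd h4 (Ne.symm huv)
          · -- v = w, so x ∈ P u v
            refine Or.inr ?_
            simp only [hPdef, mem_image, mem_range]
            exact ⟨k, by rw [h4]; exact hk, by rw [h4]⟩
    · rintro (hG | hP)
      · constructor <;>
          · simp only [hAdef, mem_union]
            exact Or.inl (Or.inl hG)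
      · constructor
        · simp only [hAdef, mem_union, mem_biUnion, mem_erase, mem_univ, and_true]
          exact Or.inr ⟨v, Ne.symm huv, hP⟩
        · simp only [hAdef, mem_union, mem_biUnion, mem_erase, mem_univ, and_true]
          exact Or.inr ⟨u, huv, by rwa [← hPsymm u v]⟩
  have hcardInt : ∀ u v : V, u ≠ v → (A u ∩ A v).card = g + s u v := by
    intro u v huv
    rw [hInt u v huv, card_union_of_disjoint (hGP u v), hcardG, hcardP]
  -- conclude
  refine ⟨A, fun u v huv => ?_⟩
  rw [hcardInt u v huv, hcardA u, hkey u v huv]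
  omega
end

section
/- Let G be a finite digraph on vertices {1,…,n}, α ∈ (0,1), and let f be a function from subsets of {1,…,n} to positive reals with f*(I) = Σ_{J ⊇ I} f(J). Suppose for all distinct vertices i, j: if i → j then f*({i,j}) > α·f*({i}), and if i ↛ j then f*({i,j}) < α·f*({i}). Then G is a proportionality α-digraph: there exist finite sets A_1,…,A_n such that i → j iff |A_i ∩ A_j| > α·|A_i| for all distinct i, j. -/
/-- If a size function `f` witnesses the edge relation via `f*`, then `G` is a
proportionality α-digraph. -/
theorem stmt_10 (n : ℕ) (E : Fin n → Fin n → Prop)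
    (α : ℝ) (hα0 : 0 < α) (hα1 : α < 1)
    (f : Finset (Fin n) → ℝ) (hfpos : ∀ I, 0 < f I)
    (fstar : Finset (Fin n) → ℝ)
    (hfstar : ∀ I, fstar I = ∑ J ∈ Finset.univ.filter (fun J => I ⊆ J), f J)
    (h1 : ∀ i j : Fin n, i ≠ j → E i j → fstar {i, j} > α * fstar {i})
    (h2 : ∀ i j : Fin n, i ≠ j → ¬ E i j → fstar {i, j} < α * fstar {i}) :
    ∃ A : Fin n → Finset ℕ, ∀ i j : Fin n, i ≠ j →
      (E i j ↔ ((A i ∩ A j).card : ℝ) > α * (A i).card) := by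
  classical
  by_cases hpair : ∃ p : Fin n × Fin n, p.1 ≠ p.2
  · obtain ⟨p0, hp0⟩ := hpair
    set pairs : Finset (Fin n × Fin n) := Finset.univ.filter (fun p => p.1 ≠ p.2) with hpairs
    have hne : pairs.Nonempty := ⟨p0, by simp [hpairs, hp0]⟩
    set ε : ℝ := pairs.inf' hne (fun p => |fstar {p.1, p.2} - α * fstar {p.1}|) with hεdef
    have hε : 0 < ε := by
      rw [hεdef, Finset.lt_inf'_iff]
      intro p hp
      have hij : p.1 ≠ p.2 := by simpa [hpairs] using hp
      rw [abs_pos, sub_ne_zero]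
      by_cases hE : E p.1 p.2
      · exact ne_of_gt (h1 _ _ hij hE)
      · exact ne_of_lt (h2 _ _ hij hE)
    obtain ⟨N, hN⟩ := exists_nat_gt ((2 : ℝ) ^ n / ε)
    have hNε : (2 : ℝ) ^ n < (N : ℝ) * ε := by
      rw [div_lt_iff₀ hε] at hN
      linarith
    set m : Finset (Fin n) → ℕ := fun J => ⌊(N : ℝ) * f J⌋₊ with hm
    set M : ℕ := (Finset.univ.sup m) + 1 with hM
    have hmM : ∀ J, m J < M := fun J =>
      Nat.lt_succ_of_le (Finset.le_sup (Finset.mem_univ J))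
    have hMpos : 0 < M := Nat.succ_pos _
    set blk : Finset (Fin n) → Finset ℕ :=
      fun J => (Finset.range (m J)).image (fun x => Encodable.encode J * M + x) with hblk
    have hcard_blk : ∀ J, (blk J).card = m J := by
      intro J
      rw [hblk]
      rw [Finset.card_image_of_injective _ (add_right_injective _)]
      exact Finset.card_range _
    have hdisj : ∀ J1 J2, J1 ≠ J2 → Disjoint (blk J1) (blk J2) := by
      intro J1 J2 hne12
      rw [Finset.disjoint_left]
      intro a ha1 ha2
      simp only [hblk, Finset.mem_image, Finset.mem_range] at ha1 ha2
      obtain ⟨x1, hx1, he1⟩ := ha1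
      obtain ⟨x2, hx2, he2⟩ := ha2
      apply hne12
      apply Encodable.encode_injective (α := Finset (Fin n))
      have h1' : a / M = Encodable.encode J1 := by
        rw [← he1, add_comm, Nat.add_mul_div_right _ _ hMpos,
          Nat.div_eq_of_lt (lt_trans hx1 (hmM J1))]
        simp
      have h2' : a / M = Encodable.encode J2 := by
        rw [← he2, add_comm, Nat.add_mul_div_right _ _ hMpos,
          Nat.div_eq_of_lt (lt_trans hx2 (hmM J2))]
        simp
      rw [← h1', h2']
    set A : Fin n → Finset ℕ :=
      fun i => (Finset.univ.filter (fun J => i ∈ J)).biUnion blk with hA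
    have hcardbi : ∀ S : Finset (Finset (Fin n)),
        (S.biUnion blk).card = ∑ J ∈ S, m J := by
      intro S
      rw [Finset.card_biUnion (fun J1 _ J2 _ h => hdisj J1 J2 h)]
      exact Finset.sum_congr rfl (fun J _ => hcard_blk J)
    have hinter : ∀ S T : Finset (Finset (Fin n)),
        (S.biUnion blk) ∩ (T.biUnion blk) = (S ∩ T).biUnion blk := by
      intro S T
      ext a
      simp only [Finset.mem_inter, Finset.mem_biUnion]
      constructor
      · rintro ⟨⟨J1, hJ1, ha1⟩, ⟨J2, hJ2, ha2⟩⟩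
        have : J1 = J2 := by
          by_contra hne12
          exact (Finset.disjoint_left.mp (hdisj J1 J2 hne12)) ha1 ha2
        exact ⟨J1, ⟨hJ1, this ▸ hJ2⟩, ha1⟩
      · rintro ⟨J, ⟨hJS, hJT⟩, ha⟩
        exact ⟨⟨J, hJS, ha⟩, ⟨J, hJT, ha⟩⟩
    have hsum_le : ∀ S : Finset (Finset (Fin n)),
        ((∑ J ∈ S, m J : ℕ) : ℝ) ≤ (N : ℝ) * ∑ J ∈ S, f J := by
      intro S
      push_cast
      rw [Finset.mul_sum]
      refine Finset.sum_le_sum (fun J _ => ?_)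
      exact Nat.floor_le (mul_nonneg (Nat.cast_nonneg N) (hfpos J).le)
    have hsum_ge : ∀ S : Finset (Finset (Fin n)),
        (N : ℝ) * (∑ J ∈ S, f J) - 2 ^ n ≤ ((∑ J ∈ S, m J : ℕ) : ℝ) := by
      intro S
      push_cast
      have hcardS : (S.card : ℝ) ≤ 2 ^ n := by
        have h1 : S.card ≤ Fintype.card (Finset (Fin n)) := Finset.card_le_univ S
        have h2 : Fintype.card (Finset (Fin n)) = 2 ^ n := by
          simp [Fintype.card_finset]
        exact_mod_cast h2 ▸ h1
      have : ∑ J ∈ S, ((N : ℝ) * f J - 1) ≤ ∑ J ∈ S, (m J : ℝ) := by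
        refine Finset.sum_le_sum (fun J _ => ?_)
        have := Nat.lt_floor_add_one ((N : ℝ) * f J)
        push_cast at this ⊢
        linarith
      rw [Finset.sum_sub_distrib, Finset.sum_const, nsmul_eq_mul, mul_one,
        ← Finset.mul_sum] at this
      linarith
    refine ⟨A, fun i j hij => ?_⟩
    set S1 : Finset (Finset (Fin n)) := Finset.univ.filter (fun J => i ∈ J) with hS1
    set S2 : Finset (Finset (Fin n)) := Finset.univ.filter (fun J => i ∈ J ∧ j ∈ J) with hS2
    have hf1 : fstar {i} = ∑ J ∈ S1, f J := by
      rw [hfstar]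
      congr 1
      apply Finset.filter_congr
      intro J _
      simp [Finset.singleton_subset_iff]
    have hf2 : fstar {i, j} = ∑ J ∈ S2, f J := by
      rw [hfstar]
      congr 1
      apply Finset.filter_congr
      intro J _
      simp [Finset.insert_subset_iff, Finset.singleton_subset_iff]
    have hAi : ((A i).card : ℝ) = ((∑ J ∈ S1, m J : ℕ) : ℝ) := by
      rw [hA]; rw [hcardbi]
    have hAij : (((A i ∩ A j).card : ℝ)) = ((∑ J ∈ S2, m J : ℕ) : ℝ) := by
      rw [hA, hinter]
      rw [hcardbi]
      congr 2
      ext J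
      simp [Finset.mem_inter, hS2, and_assoc]
    have hεle : ε ≤ |fstar {i, j} - α * fstar {i}| := by
      have hmem : (i, j) ∈ pairs := by simp [hpairs, hij]
      exact Finset.inf'_le _ hmem
    have hs1le : ((∑ J ∈ S1, m J : ℕ) : ℝ) ≤ (N : ℝ) * fstar {i} := by
      rw [hf1]; exact hsum_le S1
    have hs1ge : (N : ℝ) * fstar {i} - 2 ^ n ≤ ((∑ J ∈ S1, m J : ℕ) : ℝ) := by
      rw [hf1]; exact hsum_ge S1
    have hs2le : ((∑ J ∈ S2, m J : ℕ) : ℝ) ≤ (N : ℝ) * fstar {i, j} := by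
      rw [hf2]; exact hsum_le S2
    have hs2ge : (N : ℝ) * fstar {i, j} - 2 ^ n ≤ ((∑ J ∈ S2, m J : ℕ) : ℝ) := by
      rw [hf2]; exact hsum_ge S2
    rw [hAi, hAij]
    have hNnn : (0 : ℝ) ≤ N := Nat.cast_nonneg N
    constructor
    · intro hE
      have hd : α * fstar {i} < fstar {i, j} := h1 i j hij hE
      have habs : ε ≤ fstar {i, j} - α * fstar {i} := by
        rwa [abs_of_pos (by linarith)] at hεle
      have key : (N : ℝ) * ε ≤ (N : ℝ) * (fstar {i, j} - α * fstar {i}) :=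
        mul_le_mul_of_nonneg_left habs hNnn
      nlinarith
    · intro hgt
      by_contra hE
      have hd : fstar {i, j} < α * fstar {i} := h2 i j hij hE
      have habs : ε ≤ α * fstar {i} - fstar {i, j} := by
        rw [abs_of_neg (by linarith)] at hεle
        linarith
      have key : (N : ℝ) * ε ≤ (N : ℝ) * (α * fstar {i} - fstar {i, j}) :=
        mul_le_mul_of_nonneg_left habs hNnn
      have h2n : (0 : ℝ) < 2 ^ n := by positivity
      nlinarith
  · exact ⟨fun _ => ∅, fun i j hij => absurd ⟨(i, j), hij⟩ hpair⟩
end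

section
/- For every real α ∈ (0,1), a finite digraph G is a proportionality α-digraph if and only if G has no one-way cycle. -/
open Finset

namespace Stmt11




variable {V : Type*}




variable {V : Type*}

lemma transGen_path {R : V → V → Prop} {a b : V} (h : Relation.TransGen R a b) :
    ∃ (k : ℕ) (w : ℕ → V), 1 ≤ k ∧ w 0 = a ∧ w k = b ∧ ∀ i < k, R (w i) (w (i + 1)) := by
  induction h with
  | @single c hac =>
    refine ⟨1, fun i => if i = 0 then a else c, le_refl 1, by simp, by simp, ?_⟩
    intro i hi
    interval_cases i
    simpa using hac
  | @tail b' c hab' hb'c ih =>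
    obtain ⟨k, w, hk, hw0, hwk, hstep⟩ := ih
    refine ⟨k + 1, fun i => if i ≤ k then w i else c, by omega, by simp [hw0], ?_, ?_⟩
    · simp
    · intro i hi
      by_cases h1 : i < k
      · have h2 : i ≤ k := by omega
        have h3 : i + 1 ≤ k := by omega
        simpa [h2, h3] using hstep i h1
      · have hik : i = k := by omega
        have h2 : i ≤ k := by omega
        have h4 : ¬ (i + 1 ≤ k) := by omega
        simp only [if_pos h2, if_neg h4]
        rw [hik, hwk]; exact hb'c


lemma no_cycle_acyclic {E : V → V → Prop} (hnc : ¬ HasOneWayCycle E) (v : V) :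
    ¬ Relation.TransGen (fun a b => E a b ∧ ¬ E b a) v v := by
  intro h
  obtain ⟨k, w, hk, hw0, hwk, hstep⟩ := transGen_path h
  exact hnc ⟨k, w, hk, by rw [hwk, hw0], fun i hi => hstep i hi⟩

open Classical in
noncomputable def rk [Fintype V] (E : V → V → Prop) (v : V) : ℕ :=
  (Finset.univ.filter fun u => Relation.TransGen (fun a b => E a b ∧ ¬ E b a) u v).card

lemma rk_lt [Fintype V] {E : V → V → Prop} (hnc : ¬ HasOneWayCycle E) {u v : V}
    (huv : E u v) (hvu : ¬ E v u) : rk E u < rk E v := by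
  classical
  unfold rk
  apply Finset.card_lt_card
  rw [Finset.ssubset_iff_of_subset]
  · refine ⟨u, ?_, ?_⟩
    · simp only [Finset.mem_filter, Finset.mem_univ, true_and]
      exact Relation.TransGen.single ⟨huv, hvu⟩
    · simp only [Finset.mem_filter, Finset.mem_univ, true_and]
      exact no_cycle_acyclic hnc u
  · intro w hw
    simp only [Finset.mem_filter, Finset.mem_univ, true_and] at hw ⊢
    exact hw.tail ⟨huv, hvu⟩

lemma rk_le [Fintype V] (E : V → V → Prop) (v : V) : rk E v ≤ Fintype.card V := by
  classical
  unfold rk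
  exact le_trans (Finset.card_filter_le _ _) (le_of_eq (Finset.card_univ))






lemma slot_disjoint {C W i j a b : ℕ} (hij : i ≠ j) (ha : a ≤ W) (hb : b ≤ W) :
    Disjoint (Finset.Ico (C + i * W) (C + i * W + a))
      (Finset.Ico (C + j * W) (C + j * W + b)) := by
  rw [Finset.disjoint_left]
  intro x hx hx'
  rw [Finset.mem_Ico] at hx hx'
  rcases Nat.lt_or_ge i j with h | h
  · have h1 : (i + 1) * W ≤ j * W := Nat.mul_le_mul_right _ h
    rw [Nat.succ_mul] at h1
    linarith [hx.1, hx.2, hx'.1, hx'.2]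
  · have hji : j < i := by omega
    have h1 : (j + 1) * W ≤ i * W := Nat.mul_le_mul_right _ hji
    rw [Nat.succ_mul] at h1
    linarith [hx.1, hx.2, hx'.1, hx'.2]

lemma mul_add_lt_inj {a b a' b' m : ℕ} (hb : b < m) (hb' : b' < m)
    (h : a * m + b = a' * m + b') : a = a' ∧ b = b' := by
  have hm : 0 < m := by omega
  have ha : a = a' := by
    have e1 : (a * m + b) / m = a := by
      rw [mul_comm, Nat.mul_add_div hm, Nat.div_eq_of_lt hb, add_zero]
    have e2 : (a' * m + b') / m = a' := by
      rw [mul_comm, Nat.mul_add_div hm, Nat.div_eq_of_lt hb', add_zero]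
    rw [← e1, ← e2, h]
  subst ha
  exact ⟨rfl, Nat.add_left_cancel h⟩






section Defs

def s (f : V → ℕ) (K M : ℕ) (v : V) : ℕ := M + f v * K

def qq (E : V → V → Prop) [DecidableRel E] (f : V → ℕ) (K M : ℕ) (u v : V) : ℕ :=
  if E u v then (if E v u then max (s f K M u) (s f K M v) else s f K M u)
  else if E v u then s f K M v else 0

noncomputable def tt (E : V → V → Prop) [DecidableRel E] (f : V → ℕ) (K M : ℕ) (α : ℝ)
    (u v : V) : ℕ :=
  if E u v ∨ E v u then ⌊α * (qq E f K M u v : ℝ)⌋₊ + 1 else ⌊α * (M : ℝ)⌋₊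

noncomputable def pp (E : V → V → Prop) [DecidableRel E] (f : V → ℕ) (K M : ℕ) (α : ℝ)
    (u v : V) : ℕ := tt E f K M α u v - ⌊α * (M : ℝ)⌋₊

def idx (e : V → ℕ) (n : ℕ) (u v : V) : ℕ := min (e u) (e v) * n + max (e u) (e v)

noncomputable def blk (E : V → V → Prop) [DecidableRel E] (f e : V → ℕ) (K M n : ℕ) (α : ℝ)
    (u v : V) : Finset ℕ :=
  Finset.Ico (⌊α * (M : ℝ)⌋₊ + idx e n u v * (n * K + 2))
    (⌊α * (M : ℝ)⌋₊ + idx e n u v * (n * K + 2) + pp E f K M α u v)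

noncomputable def padlen [Fintype V] (E : V → V → Prop) [DecidableRel E] (f : V → ℕ)
    (K M : ℕ) (α : ℝ) (v : V) : ℕ :=
  s f K M v - (⌊α * (M : ℝ)⌋₊ + ∑ u : V, pp E f K M α u v)

noncomputable def pad [Fintype V] (E : V → V → Prop) [DecidableRel E] (f e : V → ℕ)
    (K M n : ℕ) (α : ℝ) (v : V) : Finset ℕ :=
  Finset.Ico (⌊α * (M : ℝ)⌋₊ + n * n * (n * K + 2) + e v * (M + n * K))
    (⌊α * (M : ℝ)⌋₊ + n * n * (n * K + 2) + e v * (M + n * K) + padlen E f K M α v)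

noncomputable def AA [Fintype V] (E : V → V → Prop) [DecidableRel E] (f e : V → ℕ)
    (K M n : ℕ) (α : ℝ) (v : V) : Finset ℕ :=
  Finset.Ico 0 ⌊α * (M : ℝ)⌋₊ ∪ Finset.univ.biUnion (fun u => blk E f e K M n α u v)
    ∪ pad E f e K M n α v

end Defs

section Lemmas

variable {E : V → V → Prop} [DecidableRel E] {f e : V → ℕ} {K M n : ℕ} {α : ℝ}

lemma qq_symm (u v : V) : qq E f K M u v = qq E f K M v u := by
  by_cases h1 : E u v <;> by_cases h2 : E v u <;> simp [qq, h1, h2, max_comm]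

lemma tt_symm (u v : V) : tt E f K M α u v = tt E f K M α v u := by
  by_cases h1 : E u v <;> by_cases h2 : E v u <;>
    simp [tt, qq, h1, h2, max_comm]

lemma pp_symm (u v : V) : pp E f K M α u v = pp E f K M α v u := by
  unfold pp
  rw [tt_symm u v]

lemma idx_symm (u v : V) : idx e n u v = idx e n v u := by
  simp [idx, min_comm, max_comm]

lemma blk_symm (u v : V) : blk E f e K M n α u v = blk E f e K M n α v u := by
  unfold blk
  rw [idx_symm u v, pp_symm u v]

lemma s_ge (v : V) : M ≤ s f K M v := Nat.le_add_right _ _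

lemma s_le (hfn : ∀ v, f v ≤ n) (v : V) : s f K M v ≤ M + n * K := by
  have := hfn v
  have : f v * K ≤ n * K := Nat.mul_le_mul_right _ this
  simp only [s]; omega

lemma qq_ge {u v : V} (h : E u v ∨ E v u) : M ≤ qq E f K M u v := by
  unfold qq
  rcases h with h | h
  · rw [if_pos h]
    by_cases h2 : E v u
    · rw [if_pos h2]; exact le_trans (s_ge u) (le_max_left _ _)
    · rw [if_neg h2]; exact s_ge u
  · by_cases h1 : E u v
    · rw [if_pos h1]
      by_cases h2 : E v u
      · rw [if_pos h2]; exact le_trans (s_ge u) (le_max_left _ _)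
      · rw [if_neg h2]; exact s_ge u
    · rw [if_neg h1, if_pos h]; exact s_ge v

lemma qq_le (hfn : ∀ v, f v ≤ n) (u v : V) : qq E f K M u v ≤ M + n * K := by
  unfold qq
  split_ifs <;>
    simp [max_le_iff, s_le hfn u, s_le hfn v, Nat.zero_le]

lemma tt_ge_c (hα0 : 0 ≤ α) (u v : V) : ⌊α * (M : ℝ)⌋₊ ≤ tt E f K M α u v := by
  unfold tt
  split_ifs with h
  · have hq : (M : ℝ) ≤ qq E f K M u v := by exact_mod_cast qq_ge h
    have : α * (M : ℝ) ≤ α * qq E f K M u v := by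
      apply mul_le_mul_of_nonneg_left hq hα0
    exact le_trans (Nat.floor_mono this) (Nat.le_succ _)
  · exact le_refl _

lemma pp_le_cap (hα0 : 0 < α) (hfn : ∀ v, f v ≤ n) (u v : V) :
    pp E f K M α u v ≤ ⌊α * ((n * K : ℕ) : ℝ)⌋₊ + 2 := by
  unfold pp tt
  split_ifs with h
  · have hq : (qq E f K M u v : ℝ) ≤ (M : ℝ) + (n * K : ℕ) := by
      exact_mod_cast qq_le hfn u v
    have h1 : α * (qq E f K M u v : ℝ) ≤ α * M + α * ((n * K : ℕ) : ℝ) := by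
      nlinarith
    have h2 : ⌊α * (qq E f K M u v : ℝ)⌋₊ < ⌊α * (M : ℝ)⌋₊ + ⌊α * ((n * K : ℕ) : ℝ)⌋₊ + 2 := by
      rw [Nat.floor_lt (by positivity)]
      have h3 := Nat.lt_floor_add_one (α * (M : ℝ))
      have h4 := Nat.lt_floor_add_one (α * ((n * K : ℕ) : ℝ))
      push_cast at h1 h3 h4 ⊢
      linarith
    omega
  · omega

lemma pp_le_slot (hα0 : 0 < α) (hα1 : α < 1) (hfn : ∀ v, f v ≤ n) (u v : V) :
    pp E f K M α u v ≤ n * K + 2 := by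
  have h1 := pp_le_cap (E := E) (f := f) (K := K) (M := M) (α := α) hα0 hfn u v
  have h2 : ⌊α * ((n * K : ℕ) : ℝ)⌋₊ ≤ n * K := by
    have hnn : (0 : ℝ) ≤ ((n * K : ℕ) : ℝ) := Nat.cast_nonneg _
    have : α * ((n * K : ℕ) : ℝ) ≤ ((n * K : ℕ) : ℝ) := by nlinarith
    exact le_trans (Nat.floor_mono this) (le_of_eq (Nat.floor_natCast _))
  omega

lemma idx_lt (hen : ∀ v, e v < n) (u v : V) : idx e n u v < n * n := by
  have h1 : min (e u) (e v) < n := lt_of_le_of_lt (min_le_left _ _) (hen u)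
  have h2 : max (e u) (e v) < n := max_lt (hen u) (hen v)
  unfold idx
  calc min (e u) (e v) * n + max (e u) (e v) < min (e u) (e v) * n + n := by omega
    _ = (min (e u) (e v) + 1) * n := by ring
    _ ≤ n * n := Nat.mul_le_mul_right _ (by omega)

lemma idx_inj (he : Function.Injective e) (hen : ∀ v, e v < n) {u v w z : V}
    (h : idx e n u v = idx e n w z) : (u = w ∧ v = z) ∨ (u = z ∧ v = w) := by
  have h2 : max (e u) (e v) < n := max_lt (hen u) (hen v)
  have h3 : max (e w) (e z) < n := max_lt (hen w) (hen z)
  obtain ⟨hmin, hmax⟩ := mul_add_lt_inj h2 h3 h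
  have hcase : (e u = e w ∧ e v = e z) ∨ (e u = e z ∧ e v = e w) := by omega
  rcases hcase with ⟨h4, h5⟩ | ⟨h4, h5⟩
  · exact Or.inl ⟨he h4, he h5⟩
  · exact Or.inr ⟨he h4, he h5⟩

lemma blk_lb {x : ℕ} {u v : V} (hx : x ∈ blk E f e K M n α u v) : ⌊α * (M : ℝ)⌋₊ ≤ x := by
  rw [blk, Finset.mem_Ico] at hx
  omega

lemma blk_ub (hα0 : 0 < α) (hα1 : α < 1) (hfn : ∀ v, f v ≤ n) (hen : ∀ v, e v < n)
    {x : ℕ} {u v : V} (hx : x ∈ blk E f e K M n α u v) :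
    x < ⌊α * (M : ℝ)⌋₊ + n * n * (n * K + 2) := by
  rw [blk, Finset.mem_Ico] at hx
  have h1 : pp E f K M α u v ≤ n * K + 2 := pp_le_slot hα0 hα1 hfn u v
  have h2 : idx e n u v + 1 ≤ n * n := idx_lt hen u v
  have h3 : (idx e n u v + 1) * (n * K + 2) ≤ n * n * (n * K + 2) :=
    Nat.mul_le_mul_right _ h2
  rw [Nat.succ_mul] at h3
  omega

lemma blk_disjoint (he : Function.Injective e) (hen : ∀ v, e v < n) (hα0 : 0 < α)
    (hα1 : α < 1) (hfn : ∀ v, f v ≤ n) {u v w z : V}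
    (hne : idx e n u v ≠ idx e n w z) :
    Disjoint (blk E f e K M n α u v) (blk E f e K M n α w z) :=
  slot_disjoint hne (pp_le_slot hα0 hα1 hfn u v) (pp_le_slot hα0 hα1 hfn w z)

lemma padlen_le [Fintype V] (hfn : ∀ v, f v ≤ n) (v : V) :
    padlen E f K M α v ≤ M + n * K :=
  le_trans (Nat.sub_le _ _) (s_le hfn v)

lemma pad_lb [Fintype V] {x : ℕ} {v : V} (hx : x ∈ pad E f e K M n α v) :
    ⌊α * (M : ℝ)⌋₊ + n * n * (n * K + 2) ≤ x := by
  rw [pad, Finset.mem_Ico] at hx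
  omega

lemma pad_disjoint [Fintype V] (he : Function.Injective e) (hfn : ∀ v, f v ≤ n)
    {u v : V} (hne : u ≠ v) :
    Disjoint (pad E f e K M n α u) (pad E f e K M n α v) := by
  have : e u ≠ e v := fun h => hne (he h)
  exact slot_disjoint this (padlen_le hfn u) (padlen_le hfn v)

lemma sum_pp_le [Fintype V] (hα0 : 0 < α) (hfn : ∀ v, f v ≤ n) (v : V) :
    ∑ u : V, pp E f K M α u v ≤ Fintype.card V * (⌊α * ((n * K : ℕ) : ℝ)⌋₊ + 2) := by
  calc ∑ u : V, pp E f K M α u v ≤ ∑ _u : V, (⌊α * ((n * K : ℕ) : ℝ)⌋₊ + 2) :=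
        Finset.sum_le_sum fun u _ => pp_le_cap hα0 hfn u v
    _ = Fintype.card V * (⌊α * ((n * K : ℕ) : ℝ)⌋₊ + 2) := by
        rw [Finset.sum_const, smul_eq_mul, Finset.card_univ]

lemma capacity [Fintype V] (hα0 : 0 < α) (hα1 : α < 1) (hfn : ∀ v, f v ≤ n)
    (hcard : Fintype.card V ≤ n)
    (hM : α * (M : ℝ) + (n : ℝ) * (α * ((n : ℝ) * (K : ℝ)) + 2) + 1 < (M : ℝ)) (v : V) :
    ⌊α * (M : ℝ)⌋₊ + ∑ u : V, pp E f K M α u v ≤ M := by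
  have h1 : (⌊α * (M : ℝ)⌋₊ : ℝ) ≤ α * M := Nat.floor_le (by positivity)
  have h2 : (∑ u : V, pp E f K M α u v) ≤ n * (⌊α * ((n * K : ℕ) : ℝ)⌋₊ + 2) :=
    le_trans (sum_pp_le hα0 hfn v) (Nat.mul_le_mul_right _ hcard)
  have h3 : (⌊α * ((n * K : ℕ) : ℝ)⌋₊ : ℝ) ≤ α * ((n : ℝ) * K) := by
    have := Nat.floor_le (by positivity : (0 : ℝ) ≤ α * ((n * K : ℕ) : ℝ))
    push_cast at this ⊢
    linarith
  have key : ((⌊α * (M : ℝ)⌋₊ + ∑ u : V, pp E f K M α u v : ℕ) : ℝ) ≤ (M : ℝ) := by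
    have h2' : ((∑ u : V, pp E f K M α u v : ℕ) : ℝ)
        ≤ (n : ℝ) * ((⌊α * ((n * K : ℕ) : ℝ)⌋₊ : ℝ) + 2) := by
      exact_mod_cast h2
    have h4 : (n : ℝ) * ((⌊α * ((n * K : ℕ) : ℝ)⌋₊ : ℝ) + 2)
        ≤ (n : ℝ) * (α * ((n : ℝ) * K) + 2) := by
      apply mul_le_mul_of_nonneg_left _ (Nat.cast_nonneg n)
      linarith
    rw [Nat.cast_add]
    linarith
  exact_mod_cast key

lemma card_AA [Fintype V] (he : Function.Injective e) (hen : ∀ v, e v < n)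
    (hα0 : 0 < α) (hα1 : α < 1) (hfn : ∀ v, f v ≤ n) (hcard : Fintype.card V ≤ n)
    (hM : α * (M : ℝ) + (n : ℝ) * (α * ((n : ℝ) * (K : ℝ)) + 2) + 1 < (M : ℝ)) (v : V) :
    (AA E f e K M n α v).card = s f K M v := by
  classical
  have hcap := capacity (E := E) (f := f) hα0 hα1 hfn hcard hM v
  have hd1 : Disjoint (Finset.Ico 0 ⌊α * (M : ℝ)⌋₊)
      (Finset.univ.biUnion (fun u => blk E f e K M n α u v)) := by
    rw [Finset.disjoint_left]
    intro x hx hx'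
    rw [Finset.mem_Ico] at hx
    rw [Finset.mem_biUnion] at hx'
    obtain ⟨w, -, hw⟩ := hx'
    exact absurd (blk_lb hw) (by omega)
  have hd2 : Disjoint
      (Finset.Ico 0 ⌊α * (M : ℝ)⌋₊ ∪ Finset.univ.biUnion (fun u => blk E f e K M n α u v))
      (pad E f e K M n α v) := by
    rw [Finset.disjoint_left]
    intro x hx hx'
    have hp := pad_lb hx'
    rw [Finset.mem_union] at hx
    rcases hx with hx | hx
    · rw [Finset.mem_Ico] at hx
      have : ⌊α * (M : ℝ)⌋₊ ≤ x := le_trans (Nat.le_add_right _ _) hp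
      omega
    · rw [Finset.mem_biUnion] at hx
      obtain ⟨w, -, hw⟩ := hx
      exact absurd (lt_of_lt_of_le (blk_ub hα0 hα1 hfn hen hw) hp) (lt_irrefl x)
  have hbd : ∀ u₁ ∈ (Finset.univ : Finset V), ∀ u₂ ∈ Finset.univ, u₁ ≠ u₂ →
      Disjoint (blk E f e K M n α u₁ v) (blk E f e K M n α u₂ v) := by
    intro u₁ _ u₂ _ hne
    apply blk_disjoint he hen hα0 hα1 hfn
    intro hidx
    rcases idx_inj he hen hidx with ⟨h4, -⟩ | ⟨h4, h5⟩
    · exact hne h4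
    · exact hne (h4.trans h5)
  rw [AA, Finset.card_union_of_disjoint hd2, Finset.card_union_of_disjoint hd1,
    Finset.card_biUnion hbd]
  have hb : ∀ u, (blk E f e K M n α u v).card = pp E f K M α u v := by
    intro u; rw [blk, Nat.card_Ico]; exact Nat.add_sub_cancel_left _ _
  simp only [hb]
  rw [pad, Nat.card_Ico, Nat.card_Ico, Nat.sub_zero, Nat.add_sub_cancel_left]
  have hple : padlen E f K M α v
      = s f K M v - (⌊α * (M : ℝ)⌋₊ + ∑ u : V, pp E f K M α u v) := rfl
  have hs : M ≤ s f K M v := s_ge v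
  omega

lemma AA_inter [Fintype V] (he : Function.Injective e) (hen : ∀ v, e v < n)
    (hα0 : 0 < α) (hα1 : α < 1) (hfn : ∀ v, f v ≤ n) {u v : V} (huv : u ≠ v) :
    AA E f e K M n α u ∩ AA E f e K M n α v
      = Finset.Ico 0 ⌊α * (M : ℝ)⌋₊ ∪ blk E f e K M n α u v := by
  classical
  ext x
  simp only [Finset.mem_inter, AA, Finset.mem_union, Finset.mem_biUnion, Finset.mem_univ,
    true_and]
  constructor
  · rintro ⟨hxu, hxv⟩
    rcases hxu with (hxu | ⟨w, hw⟩) | hxu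
    · exact Or.inl hxu
    · rcases hxv with (hxv | ⟨w', hw'⟩) | hxv
      · exact Or.inl hxv
      · by_cases hidx : idx e n w u = idx e n w' v
        · rcases idx_inj he hen hidx with ⟨h4, h5⟩ | ⟨h4, h5⟩
          · exact absurd h5 huv
          · rw [h4] at hw
            rw [blk_symm v u] at hw
            exact Or.inr hw
        · exact ((Finset.disjoint_left.mp
            (blk_disjoint he hen hα0 hα1 hfn hidx) hw) hw').elim
      · exact absurd (lt_of_lt_of_le (blk_ub hα0 hα1 hfn hen hw) (pad_lb hxv))
          (lt_irrefl x)
    · rcases hxv with (hxv | ⟨w', hw'⟩) | hxv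
      · exact Or.inl hxv
      · exact absurd (lt_of_lt_of_le (blk_ub hα0 hα1 hfn hen hw') (pad_lb hxu))
          (lt_irrefl x)
      · exact ((Finset.disjoint_left.mp (pad_disjoint he hfn huv) hxu) hxv).elim
  · rintro (hx | hx)
    · exact ⟨Or.inl (Or.inl hx), Or.inl (Or.inl hx)⟩
    · refine ⟨Or.inl (Or.inr ⟨v, ?_⟩), Or.inl (Or.inr ⟨u, hx⟩)⟩
      rw [blk_symm v u]
      exact hx

lemma AA_inter_card [Fintype V] (he : Function.Injective e) (hen : ∀ v, e v < n)
    (hα0 : 0 < α) (hα1 : α < 1) (hfn : ∀ v, f v ≤ n) {u v : V} (huv : u ≠ v) :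
    (AA E f e K M n α u ∩ AA E f e K M n α v).card = tt E f K M α u v := by
  rw [AA_inter he hen hα0 hα1 hfn huv]
  have hd : Disjoint (Finset.Ico 0 ⌊α * (M : ℝ)⌋₊) (blk E f e K M n α u v) := by
    rw [Finset.disjoint_left]
    intro x hx hx'
    rw [Finset.mem_Ico] at hx
    exact absurd (blk_lb hx') (by omega)
  rw [Finset.card_union_of_disjoint hd, Nat.card_Ico, blk, Nat.card_Ico,
    Nat.sub_zero, Nat.add_sub_cancel_left]
  have h1 := tt_ge_c (E := E) (f := f) (K := K) (M := M) (α := α) (le_of_lt hα0) u v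
  unfold pp
  omega

lemma tt_spec (hα0 : 0 < α) (hα1 : α < 1) (hK : 1 < α * (K : ℝ))
    (hrank : ∀ a b : V, E a b → ¬ E b a → f a < f b) (u v : V) :
    E u v ↔ ((tt E f K M α u v : ℝ) > α * ((s f K M u : ℕ) : ℝ)) := by
  have hsuM : (M : ℝ) ≤ ((s f K M u : ℕ) : ℝ) := by exact_mod_cast s_ge (f := f) (K := K) (M := M) u
  constructor
  · intro h
    have hcond : E u v ∨ E v u := Or.inl h
    have hq : ((s f K M u : ℕ) : ℝ) ≤ ((qq E f K M u v : ℕ) : ℝ) := by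
      have : s f K M u ≤ qq E f K M u v := by
        unfold qq
        rw [if_pos h]
        by_cases h2 : E v u
        · rw [if_pos h2]; exact le_max_left _ _
        · rw [if_neg h2]
      exact_mod_cast this
    rw [tt, if_pos hcond]
    have h1 : α * ((qq E f K M u v : ℕ) : ℝ) < ⌊α * ((qq E f K M u v : ℕ) : ℝ)⌋₊ + 1 :=
      Nat.lt_floor_add_one _
    have h2 : α * ((s f K M u : ℕ) : ℝ) ≤ α * ((qq E f K M u v : ℕ) : ℝ) :=
      mul_le_mul_of_nonneg_left hq hα0.le
    push_cast
    linarith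
  · intro h
    by_contra hneg
    have hle : ((tt E f K M α u v : ℕ) : ℝ) ≤ α * ((s f K M u : ℕ) : ℝ) := by
      by_cases h2 : E v u
      · have hcond : E u v ∨ E v u := Or.inr h2
        have hqq : qq E f K M u v = s f K M v := by
          unfold qq; rw [if_neg hneg, if_pos h2]
        rw [tt, if_pos hcond, hqq]
        have hf : f v < f u := hrank v u h2 hneg
        have h3 : (⌊α * ((s f K M v : ℕ) : ℝ)⌋₊ : ℝ) ≤ α * ((s f K M v : ℕ) : ℝ) :=
          Nat.floor_le (by positivity)
        have h4 : ((s f K M v : ℕ) : ℝ) + (K : ℝ) ≤ ((s f K M u : ℕ) : ℝ) := by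
          have hf' : f v + 1 ≤ f u := hf
          have : s f K M v + K ≤ s f K M u := by
            unfold s
            have : (f v + 1) * K ≤ f u * K := Nat.mul_le_mul_right _ hf'
            rw [Nat.succ_mul] at this
            omega
          exact_mod_cast this
        have h5 : α * (((s f K M v : ℕ) : ℝ) + (K : ℝ)) ≤ α * ((s f K M u : ℕ) : ℝ) :=
          mul_le_mul_of_nonneg_left h4 hα0.le
        push_cast
        nlinarith
      · have hcond : ¬ (E u v ∨ E v u) := by tauto
        rw [tt, if_neg hcond]
        have h3 : (⌊α * (M : ℝ)⌋₊ : ℝ) ≤ α * (M : ℝ) := Nat.floor_le (by positivity)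
        nlinarith
    linarith

end Lemmas


end Stmt11

/-- For any real α ∈ (0,1), a finite digraph is a proportionality α-digraph iff it has
no one-way cycle. -/
theorem stmt_11 {V : Type*} [Fintype V] (E : V → V → Prop)
    (hirr : Irreflexive E) (α : ℝ) (hα0 : 0 < α) (hα1 : α < 1) :
    (∃ A : V → Finset ℕ, ∀ u v : V, u ≠ v →
        (E u v ↔ ((A u ∩ A v).card : ℝ) > α * (A u).card)) ↔
      ¬ HasOneWayCycle E := by
  classical
  constructor
  · rintro ⟨A, hA⟩ ⟨k, w, hk, hwk, hstep⟩
    have key : ∀ i < k, ((A (w i)).card : ℝ) < (A (w (i + 1))).card := by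
      intro i hi
      obtain ⟨he1, he2⟩ := hstep i hi
      have hne : w i ≠ w (i + 1) := by
        intro hcontra
        have := he1
        rw [← hcontra] at this
        exact hirr _ this
      have h1 : ((A (w i) ∩ A (w (i + 1))).card : ℝ) > α * (A (w i)).card :=
        (hA _ _ hne).mp he1
      have h2 : ¬ (((A (w (i + 1)) ∩ A (w i)).card : ℝ) > α * (A (w (i + 1))).card) := by
        intro hcontra
        exact he2 ((hA _ _ hne.symm).mpr hcontra)
      push_neg at h2
      rw [Finset.inter_comm] at h2
      have hlt : α * ((A (w i)).card : ℝ) < α * ((A (w (i + 1))).card : ℝ) :=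
        lt_of_lt_of_le h1 h2
      exact lt_of_mul_lt_mul_left hlt hα0.le
    have mono : ∀ i, i ≤ k → ((A (w 0)).card : ℝ) ≤ (A (w i)).card := by
      intro i
      induction i with
      | zero => intro _; exact le_refl _
      | succ j ih => intro hj; exact le_trans (ih (by omega)) (le_of_lt (key j (by omega)))
    have h1 : ((A (w 0)).card : ℝ) < (A (w k)).card := by
      obtain ⟨k', rfl⟩ : ∃ k', k = k' + 1 := ⟨k - 1, by omega⟩
      exact lt_of_le_of_lt (mono k' (by omega)) (key k' (by omega))
    rw [hwk] at h1
    exact lt_irrefl _ h1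
  · intro hnc
    letI : DecidableRel E := Classical.decRel E
    set n : ℕ := Fintype.card V + 1 with hn
    obtain ⟨K, hK⟩ := exists_nat_gt (1 / α)
    have hK' : 1 < α * K := by
      rw [div_lt_iff₀ hα0] at hK
      linarith
    obtain ⟨M, hMgt⟩ := exists_nat_gt (((n : ℝ) * (α * ((n : ℝ) * K) + 2) + 1) / (1 - α))
    have hM : α * (M : ℝ) + (n : ℝ) * (α * ((n : ℝ) * (K : ℝ)) + 2) + 1 < (M : ℝ) := by
      have h1α : (0 : ℝ) < 1 - α := by linarith
      rw [div_lt_iff₀ h1α] at hMgt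
      have hring : (M : ℝ) * (1 - α) = M - α * M := by ring
      linarith
    set eqv := (Fintype.equivFin V) with heqv
    set e : V → ℕ := fun v => (eqv v : ℕ) with hedef
    have he : Function.Injective e := fun a b h => eqv.injective (Fin.val_injective h)
    have hen : ∀ v, e v < n := fun v => lt_of_lt_of_le (eqv v).isLt (by omega)
    set f : V → ℕ := Stmt11.rk E with hfdef
    have hfn : ∀ v, f v ≤ n := fun v => le_trans (Stmt11.rk_le E v) (by omega)
    have hcard : Fintype.card V ≤ n := by omega
    have hrank : ∀ a b : V, E a b → ¬ E b a → f a < f b := fun a b h1 h2 =>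
      Stmt11.rk_lt hnc h1 h2
    refine ⟨Stmt11.AA E f e K M n α, fun u v huv => ?_⟩
    rw [Stmt11.AA_inter_card he hen hα0 hα1 hfn huv,
      Stmt11.card_AA he hen hα0 hα1 hfn hcard hM u]
    exact Stmt11.tt_spec hα0 hα1 hK' hrank u v
end

section
/- For any two reals α, β ∈ (0,1), a finite digraph G is a proportionality α-digraph if and only if it is a proportionality β-digraph. -/
theorem aux_transfer {V : Type*} [Fintype V] (E : V → V → Prop)
    (α β : ℝ) (hα0 : 0 < α) (hα1 : α < 1) (hβ0 : 0 < β) (hβ1 : β < 1)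
    (h : ∃ A : V → Finset ℕ, ∀ u v : V, u ≠ v →
        (E u v ↔ ((A u ∩ A v).card : ℝ) > α * (A u).card)) :
    ∃ A : V → Finset ℕ, ∀ u v : V, u ≠ v →
        (E u v ↔ ((A u ∩ A v).card : ℝ) > β * (A u).card) := by
  classical
  obtain ⟨A, hA⟩ := h
  set a : V → ℕ := fun u => (A u).card with ha
  set t : V → ℕ := fun u => ⌊α * a u⌋₊ + 1 with htdef
  have ht : ∀ u (c : ℕ), ((c:ℝ) > α * a u ↔ t u ≤ c) := by
    intro u c
    rw [htdef]
    simp only [Nat.add_one_le_iff]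
    rw [Nat.floor_lt (by positivity)]
  -- choose s
  obtain ⟨s, hs⟩ := exists_nat_ge ((β * (Finset.univ.sup a : ℕ)) / (1 - β))
  have h1β : (0:ℝ) < 1 - β := by linarith
  have hsbig : ∀ u, β * a u ≤ (1 - β) * s := by
    intro u
    have h1 : (a u : ℝ) ≤ (Finset.univ.sup a : ℕ) := by
      exact_mod_cast Nat.cast_le.mpr (Finset.le_sup (f := a) (Finset.mem_univ u))
    have h2 : β * (Finset.univ.sup a : ℕ) ≤ (1 - β) * s := by
      rw [div_le_iff₀ h1β] at hs
      nlinarith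
    nlinarith
  set L : V → ℝ := fun u => ((t u : ℝ) - 1 - β * a u + (1 - β) * s) / β with hLdef
  have hL0 : ∀ u, 0 ≤ L u := by
    intro u
    apply div_nonneg _ (le_of_lt hβ0)
    have : (1:ℝ) ≤ t u := by exact_mod_cast Nat.one_le_iff_ne_zero.mpr (by simp [htdef])
    have := hsbig u
    linarith
  set p : V → ℕ := fun u => ⌈L u⌉₊ with hpdef
  have hp1 : ∀ u, L u ≤ p u := fun u => Nat.le_ceil _
  have hp2 : ∀ u, (p u : ℝ) < L u + 1 := fun u => Nat.ceil_lt_add_one (hL0 u)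
  -- key threshold bounds
  have hT1 : ∀ u, (t u : ℝ) - 1 ≤ β * a u + β * p u - (1 - β) * s := by
    intro u
    have := hp1 u
    have hb : β * L u = (t u : ℝ) - 1 - β * a u + (1 - β) * s := by
      rw [hLdef]; field_simp
    nlinarith
  have hT2 : ∀ u, β * a u + β * p u - (1 - β) * s < t u := by
    intro u
    have := hp2 u
    have hb : β * L u = (t u : ℝ) - 1 - β * a u + (1 - β) * s := by
      rw [hLdef]; field_simp
    nlinarith
  -- the key numeric equivalence
  have hkey : ∀ u (c : ℕ), (((c + s : ℕ)):ℝ) > β * ((a u + s + p u : ℕ):ℝ) ↔ ((c:ℝ) > α * a u) := by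
    intro u c
    rw [ht u c]
    push_cast
    constructor
    · intro hc
      have h1 := hT1 u
      by_contra hcon
      push_neg at hcon
      have : (c : ℝ) ≤ (t u : ℝ) - 1 := by
        have : c + 1 ≤ t u := hcon
        exact_mod_cast by push_cast; linarith [show ((c:ℝ)+1 ≤ (t u:ℝ)) from by exact_mod_cast this]
      nlinarith
    · intro hc
      have h2 := hT2 u
      have : (t u : ℝ) ≤ c := by exact_mod_cast hc
      nlinarith
  -- construction
  set M : ℕ := (Finset.univ.sup fun u => (A u).sup id) + 1 with hMdef
  have hM : ∀ u, ∀ x ∈ A u, x < M := by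
    intro u x hx
    have h1 : x ≤ (A u).sup id := Finset.le_sup (f := id) hx
    have h2 : (A u).sup id ≤ Finset.univ.sup fun u => (A u).sup id :=
      Finset.le_sup (f := fun u => (A u).sup id) (Finset.mem_univ u)
    omega
  set e : V → ℕ := fun v => ((Fintype.equivFin V) v : ℕ) with hedef
  have he : Function.Injective e := by
    intro u v huv
    have := Fin.val_injective huv
    exact (Fintype.equivFin V).injective this
  set K : ℕ := (Finset.univ.sup p) + 1 with hKdef
  have hK : ∀ u, p u ≤ K := by
    intro u
    have := Finset.le_sup (f := p) (Finset.mem_univ u)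
    omega
  set B : V → Finset ℕ := fun u =>
    A u ∪ Finset.Ico M (M + s) ∪ Finset.Ico (M + s + K * e u) (M + s + K * e u + p u) with hBdef
  have hdisj1 : ∀ u, Disjoint (A u ∪ Finset.Ico M (M + s))
      (Finset.Ico (M + s + K * e u) (M + s + K * e u + p u)) := by
    intro u
    rw [Finset.disjoint_left]
    intro x hx hx'
    simp only [Finset.mem_union, Finset.mem_Ico] at hx hx'
    rcases hx with hx | hx
    · have := hM u x hx; omega
    · omega
  have hdisj2 : ∀ u, Disjoint (A u) (Finset.Ico M (M + s)) := by
    intro u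
    rw [Finset.disjoint_left]
    intro x hx hx'
    simp only [Finset.mem_Ico] at hx'
    have := hM u x hx; omega
  have hcardB : ∀ u, (B u).card = a u + s + p u := by
    intro u
    rw [hBdef]
    rw [Finset.card_union_of_disjoint (hdisj1 u), Finset.card_union_of_disjoint (hdisj2 u)]
    simp [Nat.card_Ico, ha]
  have hint : ∀ u v, u ≠ v → B u ∩ B v = (A u ∩ A v) ∪ Finset.Ico M (M + s) := by
    intro u v huv
    have heuv : e u ≠ e v := fun hh => huv (he hh)
    ext x
    simp only [hBdef, Finset.mem_inter, Finset.mem_union, Finset.mem_Ico]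
    have hMu := hM u x
    have hMv := hM v x
    have hKu := hK u
    have hKv := hK v
    rcases Nat.lt_trichotomy (e u) (e v) with hlt | heq | hlt
    · have hmul : K * e u + K ≤ K * e v := by
        have h := Nat.mul_le_mul_left K hlt
        rw [Nat.mul_succ] at h
        exact h
      constructor
      · rintro ⟨(hu | hu) | hu, (hv | hv) | hv⟩ <;>
          first
          | exact Or.inl ⟨hu, hv⟩
          | exact Or.inr hv
          | (exfalso; first
              | (have := hMu hu; omega)
              | (have := hMv hv; omega)
              | omega)
      · rintro (⟨hu, hv⟩ | hS)
        · exact ⟨Or.inl (Or.inl hu), Or.inl (Or.inl hv)⟩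
        · exact ⟨Or.inl (Or.inr hS), Or.inl (Or.inr hS)⟩
    · exact absurd heq heuv
    · have hmul : K * e v + K ≤ K * e u := by
        have h := Nat.mul_le_mul_left K hlt
        rw [Nat.mul_succ] at h
        exact h
      constructor
      · rintro ⟨(hu | hu) | hu, (hv | hv) | hv⟩ <;>
          first
          | exact Or.inl ⟨hu, hv⟩
          | exact Or.inr hv
          | (exfalso; first
              | (have := hMu hu; omega)
              | (have := hMv hv; omega)
              | omega)
      · rintro (⟨hu, hv⟩ | hS)
        · exact ⟨Or.inl (Or.inl hu), Or.inl (Or.inl hv)⟩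
        · exact ⟨Or.inl (Or.inr hS), Or.inl (Or.inr hS)⟩
  have hcardInt : ∀ u v, u ≠ v → (B u ∩ B v).card = (A u ∩ A v).card + s := by
    intro u v huv
    rw [hint u v huv]
    rw [Finset.card_union_of_disjoint]
    · simp [Nat.card_Ico]
    · rw [Finset.disjoint_left]
      intro x hx hx'
      simp only [Finset.mem_inter] at hx
      simp only [Finset.mem_Ico] at hx'
      have := hM u x hx.1; omega
  refine ⟨B, fun u v huv => ?_⟩
  rw [hA u v huv, hcardInt u v huv, hcardB u]
  exact (hkey u (A u ∩ A v).card).symm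

/-- For any α, β ∈ (0,1), a finite digraph is a proportionality α-digraph iff it is a
proportionality β-digraph. -/
theorem stmt_12 {V : Type*} [Fintype V] (E : V → V → Prop)
    (hirr : Irreflexive E)
    (α β : ℝ) (hα0 : 0 < α) (hα1 : α < 1) (hβ0 : 0 < β) (hβ1 : β < 1) :
    (∃ A : V → Finset ℕ, ∀ u v : V, u ≠ v →
        (E u v ↔ ((A u ∩ A v).card : ℝ) > α * (A u).card)) ↔
    (∃ A : V → Finset ℕ, ∀ u v : V, u ≠ v →
        (E u v ↔ ((A u ∩ A v).card : ℝ) > β * (A u).card)) := by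
  constructor
  · exact aux_transfer E α β hα0 hα1 hβ0 hβ1
  · exact aux_transfer E β α hβ0 hβ1 hα0 hα1
end

section
/- Let A_u = {0,1,2,3,4,5}, A_v = {0,1,2,3,6,7,8,9}, A_w = {0,1,2,6,7}. With α = 0.5 and β = 0.99, for each ordered pair (X,Y) ∈ {(u,v),(v,w),(w,u)} we have α·|A_X| < |A_X ∩ A_Y| < β·|A_X|, while for each reversed pair (v,u),(w,v),(u,w) this condition fails. Hence the one-way 3-cycle u → v → w → u is (α,β)-proportional even though it has a one-way cycle. -/
/-- The one-way 3-cycle `u → v → w → u` is (1/2, 99/100)-proportional, witnessed by the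
explicit sets `A_u = {0,…,5}`, `A_v = {0,1,2,3,6,7,8,9}`, `A_w = {0,1,2,6,7}`. -/
theorem stmt_14 (Au Av Aw : Finset ℕ)
    (hu : Au = {0, 1, 2, 3, 4, 5})
    (hv : Av = {0, 1, 2, 3, 6, 7, 8, 9})
    (hw : Aw = {0, 1, 2, 6, 7}) :
    -- the three cycle edges satisfy the (α,β)-condition
    ((1/2 : ℝ) * Au.card < ((Au ∩ Av).card : ℝ) ∧ ((Au ∩ Av).card : ℝ) < (99/100 : ℝ) * Au.card) ∧
    ((1/2 : ℝ) * Av.card < ((Av ∩ Aw).card : ℝ) ∧ ((Av ∩ Aw).card : ℝ) < (99/100 : ℝ) * Av.card) ∧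
    ((1/2 : ℝ) * Aw.card < ((Aw ∩ Au).card : ℝ) ∧ ((Aw ∩ Au).card : ℝ) < (99/100 : ℝ) * Aw.card) ∧
    -- the three reversed pairs fail it
    ¬ ((1/2 : ℝ) * Av.card < ((Av ∩ Au).card : ℝ) ∧ ((Av ∩ Au).card : ℝ) < (99/100 : ℝ) * Av.card) ∧
    ¬ ((1/2 : ℝ) * Aw.card < ((Aw ∩ Av).card : ℝ) ∧ ((Aw ∩ Av).card : ℝ) < (99/100 : ℝ) * Aw.card) ∧
    ¬ ((1/2 : ℝ) * Au.card < ((Au ∩ Aw).card : ℝ) ∧ ((Au ∩ Aw).card : ℝ) < (99/100 : ℝ) * Au.card) ∧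
    -- hence the one-way 3-cycle is (1/2, 99/100)-proportional
    (∃ A : Fin 3 → Finset ℕ, ∀ i j : Fin 3, i ≠ j →
      (j = i + 1 ↔
        ((1/2 : ℝ) * (A i).card < ((A i ∩ A j).card : ℝ) ∧
          ((A i ∩ A j).card : ℝ) < (99/100 : ℝ) * (A i).card))) := by
  subst hu hv hw
  have h1 : (({0,1,2,3,4,5} : Finset ℕ) ∩ {0,1,2,3,6,7,8,9}).card = 4 := by decide
  have h2 : (({0,1,2,3,6,7,8,9} : Finset ℕ) ∩ {0,1,2,6,7}).card = 5 := by decide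
  have h3 : (({0,1,2,6,7} : Finset ℕ) ∩ {0,1,2,3,4,5}).card = 3 := by decide
  have h4 : (({0,1,2,3,6,7,8,9} : Finset ℕ) ∩ {0,1,2,3,4,5}).card = 4 := by decide
  have h5 : (({0,1,2,6,7} : Finset ℕ) ∩ {0,1,2,3,6,7,8,9}).card = 5 := by decide
  have h6 : (({0,1,2,3,4,5} : Finset ℕ) ∩ {0,1,2,6,7}).card = 3 := by decide
  have c1 : ({0,1,2,3,4,5} : Finset ℕ).card = 6 := by decide
  have c2 : ({0,1,2,3,6,7,8,9} : Finset ℕ).card = 8 := by decide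
  have c3 : ({0,1,2,6,7} : Finset ℕ).card = 5 := by decide
  have E1 : (1/2 : ℝ) * ({0,1,2,3,4,5} : Finset ℕ).card < ((({0,1,2,3,4,5} : Finset ℕ) ∩ {0,1,2,3,6,7,8,9}).card : ℝ) ∧ ((({0,1,2,3,4,5} : Finset ℕ) ∩ {0,1,2,3,6,7,8,9}).card : ℝ) < (99/100 : ℝ) * ({0,1,2,3,4,5} : Finset ℕ).card := by
    rw [h1, c1]; norm_num
  have E2 : (1/2 : ℝ) * ({0,1,2,3,6,7,8,9} : Finset ℕ).card < ((({0,1,2,3,6,7,8,9} : Finset ℕ) ∩ {0,1,2,6,7}).card : ℝ) ∧ ((({0,1,2,3,6,7,8,9} : Finset ℕ) ∩ {0,1,2,6,7}).card : ℝ) < (99/100 : ℝ) * ({0,1,2,3,6,7,8,9} : Finset ℕ).card := by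
    rw [h2, c2]; norm_num
  have E3 : (1/2 : ℝ) * ({0,1,2,6,7} : Finset ℕ).card < ((({0,1,2,6,7} : Finset ℕ) ∩ {0,1,2,3,4,5}).card : ℝ) ∧ ((({0,1,2,6,7} : Finset ℕ) ∩ {0,1,2,3,4,5}).card : ℝ) < (99/100 : ℝ) * ({0,1,2,6,7} : Finset ℕ).card := by
    rw [h3, c3]; norm_num
  have N1 : ¬ ((1/2 : ℝ) * ({0,1,2,3,6,7,8,9} : Finset ℕ).card < ((({0,1,2,3,6,7,8,9} : Finset ℕ) ∩ {0,1,2,3,4,5}).card : ℝ) ∧ ((({0,1,2,3,6,7,8,9} : Finset ℕ) ∩ {0,1,2,3,4,5}).card : ℝ) < (99/100 : ℝ) * ({0,1,2,3,6,7,8,9} : Finset ℕ).card) := by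
    rw [h4, c2]; norm_num
  have N2 : ¬ ((1/2 : ℝ) * ({0,1,2,6,7} : Finset ℕ).card < ((({0,1,2,6,7} : Finset ℕ) ∩ {0,1,2,3,6,7,8,9}).card : ℝ) ∧ ((({0,1,2,6,7} : Finset ℕ) ∩ {0,1,2,3,6,7,8,9}).card : ℝ) < (99/100 : ℝ) * ({0,1,2,6,7} : Finset ℕ).card) := by
    rw [h5, c3]; norm_num
  have N3 : ¬ ((1/2 : ℝ) * ({0,1,2,3,4,5} : Finset ℕ).card < ((({0,1,2,3,4,5} : Finset ℕ) ∩ {0,1,2,6,7}).card : ℝ) ∧ ((({0,1,2,3,4,5} : Finset ℕ) ∩ {0,1,2,6,7}).card : ℝ) < (99/100 : ℝ) * ({0,1,2,3,4,5} : Finset ℕ).card) := by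
    rw [h6, c1]; norm_num
  refine ⟨E1, E2, E3, N1, N2, N3,
    ⟨![{0,1,2,3,4,5}, {0,1,2,3,6,7,8,9}, {0,1,2,6,7}], ?_⟩⟩
  intro i j hij
  fin_cases i <;> fin_cases j <;>
    simp only [Matrix.cons_val_zero, Matrix.cons_val_one, Matrix.head_cons,
      Matrix.cons_val_two, Matrix.tail_cons, Nat.reduceAdd, Fin.isValue] at hij ⊢
  · exact absurd rfl hij
  · exact iff_of_true (by decide) E1
  · exact iff_of_false (by decide) N3
  · exact iff_of_false (by decide) N1
  · exact absurd rfl hij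
  · exact iff_of_true (by decide) E2
  · exact iff_of_true (by decide) E3
  · exact iff_of_false (by decide) N2
  · exact absurd rfl hij
end

section
/- Let n ≥ 1, p < q positive integers, and a, m natural numbers satisfying (q−p)·a > q and m·p²·(q−p)^{n−2} > a·p·n. Then for all 1 ≤ i ≤ n: (m·p²·q^{n−2} + a·p·n) / (m·p·q^{n−1} + a·p·n + q·i) > p/q, and subtracting z = m·p²·(q−p)^{n−2} from the numerator makes the ratio strictly less than p/q: (m·p²·q^{n−2} + a·p·n − z) / (m·p·q^{n−1} + a·p·n + q·i) < p/q. -/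
theorem stmt_18 (n p q a m : ℕ) (hn : 2 ≤ n) (hp : 0 < p) (hpq : p < q)
    (ha : (q - p) * a > q) (hm : m * p ^ 2 * (q - p) ^ (n - 2) > a * p * n)
    (i : ℕ) (hi1 : 1 ≤ i) (hin : i ≤ n) :
    ((m * p ^ 2 * q ^ (n - 2) + a * p * n : ℚ) /
        (m * p * q ^ (n - 1) + a * p * n + q * i) > (p : ℚ) / q) ∧
    ((m * p ^ 2 * q ^ (n - 2) + a * p * n - m * p ^ 2 * (q - p) ^ (n - 2) : ℚ) /
        (m * p * q ^ (n - 1) + a * p * n + q * i) < (p : ℚ) / q) := by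
  have hqp : p ≤ q := le_of_lt hpq
  have hsub : ((q - p : ℕ) : ℚ) = (q : ℚ) - p := Nat.cast_sub hqp
  have ha' : (q : ℚ) < ((q : ℚ) - p) * a := by
    rw [← hsub]; exact_mod_cast ha
  have hm' : (a : ℚ) * p * n < m * p ^ 2 * ((q : ℚ) - p) ^ (n - 2) := by
    rw [← hsub]; exact_mod_cast hm
  have hexp : n - 1 = (n - 2) + 1 := by omega
  have hq1 : (q : ℚ) ^ (n - 1) = q ^ (n - 2) * q := by
    rw [hexp, pow_succ]
  have hq0 : (0 : ℚ) < q := by exact_mod_cast hpq.trans_le' hp.le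
  have hp0 : (0 : ℚ) < p := by exact_mod_cast hp
  have hi0 : (1 : ℚ) ≤ i := by exact_mod_cast hi1
  have hin' : (i : ℚ) ≤ n := by exact_mod_cast hin
  have hdpos : (0 : ℚ) < m * p * q ^ (n - 1) + a * p * n + q * i := by
    positivity
  have hd : (0 : ℚ) < (q : ℚ) - p := by
    have : (p : ℚ) < q := by exact_mod_cast hpq
    linarith
  have ha0 : (0 : ℚ) ≤ a := by positivity
  have hm0 : (0 : ℚ) ≤ m := by positivity
  have hqn2 : (0 : ℚ) < (q : ℚ) ^ (n - 2) := by positivity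
  constructor
  · rw [gt_iff_lt, div_lt_div_iff₀ hq0 hdpos, hq1]
    have hn0 : (0 : ℚ) < n := by positivity
    linarith [mul_lt_mul_of_pos_left ha' (mul_pos hp0 hn0),
      mul_le_mul_of_nonneg_left hin' (mul_pos hp0 hq0).le]
  · rw [div_lt_div_iff₀ hdpos hq0, hq1]
    have h1 : (0 : ℚ) ≤ (a : ℚ) * p ^ 2 * n := by positivity
    have h2 : (0 : ℚ) ≤ (p : ℚ) * q * i := by positivity
    linarith [mul_lt_mul_of_pos_right hm' hq0, h1, h2]
end
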